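/- arXiv:2509.10944 — 8 statements merged into one kernel-verified Lean document; each statement's English description precedes it below -/
import Mathlib

section
/- For every A > 0 and δ > δ₀ > 0 there exist N' ∈ ℕ and B > 0 such that: if (b_n) and (c_n) are sequences of positive reals satisfying b_n ≤ A e^{δ n}, c_n ≤ A e^{δ₀ n}, and ∑_{k=0}^{n} b_k c_{n−k} ≥ A⁻¹ e^{δ n} for all n, then ∑_{k=1}^{N'} b_{n+k} ≥ B e^{δ n} for all n. -/
open Finset

/-- Lemma 3.3 of Hersonsky–Paulin: for every `A > 0` and `δ > δ₀ > 0` there exist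
`N' ∈ ℕ` and `B > 0` such that any positive sequences `b, c` with `b n ≤ A e^{δ n}`,
`c n ≤ A e^{δ₀ n}` and convolution lower bound `∑_{k=0}^n b k c (n-k) ≥ A⁻¹ e^{δ n}`
satisfy `∑_{k=1}^{N'} b (n+k) ≥ B e^{δ n}` for all `n`. -/
theorem hersonsky_paulin_counting_lemma :
    ∀ A : ℝ, 0 < A → ∀ δ δ₀ : ℝ, 0 < δ₀ → δ₀ < δ →
    ∃ N' : ℕ, ∃ B : ℝ, 0 < B ∧
      ∀ b c : ℕ → ℝ, (∀ n, 0 < b n) → (∀ n, 0 < c n) →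
        (∀ n : ℕ, b n ≤ A * Real.exp (δ * n)) →
        (∀ n : ℕ, c n ≤ A * Real.exp (δ₀ * n)) →
        (∀ n : ℕ, A⁻¹ * Real.exp (δ * n) ≤ ∑ k ∈ Finset.range (n + 1), b k * c (n - k)) →
        ∀ n : ℕ, B * Real.exp (δ * n) ≤ ∑ k ∈ Finset.Icc 1 N', b (n + k) := by
  intro A hA δ δ₀ hδ₀ hδ
  set lam : ℝ := δ - δ₀ with hlam_def
  have hlam : 0 < lam := by simp only [hlam_def]; linarith
  have hexp1 : 1 < Real.exp lam := by rw [Real.one_lt_exp_iff]; exact hlam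
  set K : ℝ := A ^ 2 * Real.exp lam / (Real.exp lam - 1) with hK_def
  have hK : 0 < K := div_pos (by positivity) (by linarith)
  obtain ⟨m₀, hm₀⟩ := exists_nat_ge (Real.log (2 * A * K) / lam)
  set m : ℕ := m₀ + 1 with hm_def
  have hkey : 2 * A * K ≤ Real.exp (lam * m) := by
    have h1 : Real.log (2 * A * K) ≤ lam * m := by
      rw [div_le_iff₀ hlam] at hm₀
      have hmm : (m₀ : ℝ) ≤ m := by
        rw [hm_def]; push_cast; linarith
      nlinarith
    calc 2 * A * K = Real.exp (Real.log (2 * A * K)) := (Real.exp_log (by positivity)).symm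
      _ ≤ Real.exp (lam * m) := Real.exp_le_exp.mpr h1
  refine ⟨m, Real.exp (lam * m) / (2 * A ^ 2), by positivity, ?_⟩
  intro b c hb hc hbA hcA hconv n
  set n' : ℕ := n + m with hn'_def
  have hcast : (n' : ℝ) = n + m := by rw [hn'_def]; push_cast; ring
  -- split the convolution sum
  have hsplit : (∑ k ∈ Finset.range (n' + 1), b k * c (n' - k))
      = (∑ k ∈ Finset.range (n + 1), b k * c (n' - k))
        + ∑ k ∈ Finset.Ico (n + 1) (n' + 1), b k * c (n' - k) := by
    have h := Finset.sum_Ico_consecutive (fun k => b k * c (n' - k))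
      (Nat.zero_le (n + 1)) (show n + 1 ≤ n' + 1 by omega)
    simp only [← Finset.range_eq_Ico] at h
    exact h.symm
  -- bound the low part
  have hlow : (∑ k ∈ Finset.range (n + 1), b k * c (n' - k))
      ≤ K * Real.exp (δ₀ * m) * Real.exp (δ * n) := by
    have step1 : (∑ k ∈ Finset.range (n + 1), b k * c (n' - k))
        ≤ ∑ k ∈ Finset.range (n + 1), A ^ 2 * Real.exp (δ₀ * n') * Real.exp lam ^ k := by
      apply Finset.sum_le_sum
      intro k hk
      have hkn : k ≤ n' := by
        simp only [Finset.mem_range] at hk; omega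
      have hsub : ((n' - k : ℕ) : ℝ) = (n' : ℝ) - k := by
        push_cast [Nat.cast_sub hkn]; ring
      have h1 : b k * c (n' - k) ≤ (A * Real.exp (δ * k)) * (A * Real.exp (δ₀ * (n' - k : ℕ))) :=
        mul_le_mul (hbA k) (hcA _) (hc _).le (by positivity)
      refine h1.trans_eq ?_
      rw [hsub]
      have hpk : Real.exp lam ^ k = Real.exp (lam * k) := by
        rw [← Real.exp_nat_mul, mul_comm]
      rw [hpk,
        show A * Real.exp (δ * k) * (A * Real.exp (δ₀ * ((n' : ℝ) - k)))
          = A ^ 2 * (Real.exp (δ * k) * Real.exp (δ₀ * ((n' : ℝ) - k))) by ring,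
        ← Real.exp_add,
        show δ * k + δ₀ * ((n' : ℝ) - k) = δ₀ * n' + lam * k by
          simp only [hlam_def]; ring,
        Real.exp_add]
      ring
    have step2 : (∑ k ∈ Finset.range (n + 1), A ^ 2 * Real.exp (δ₀ * n') * Real.exp lam ^ k)
        = A ^ 2 * Real.exp (δ₀ * n') * ((Real.exp lam ^ (n + 1) - 1) / (Real.exp lam - 1)) := by
      rw [← Finset.mul_sum, geom_sum_eq (ne_of_gt hexp1)]
    have step3 : A ^ 2 * Real.exp (δ₀ * n') * ((Real.exp lam ^ (n + 1) - 1) / (Real.exp lam - 1))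
        ≤ A ^ 2 * Real.exp (δ₀ * n') * (Real.exp lam ^ (n + 1) / (Real.exp lam - 1)) := by
      apply mul_le_mul_of_nonneg_left _ (by positivity)
      apply div_le_div_of_nonneg_right _ (by linarith)
      · linarith
    have hp : Real.exp lam ^ (n + 1) = Real.exp (lam * ((n : ℝ) + 1)) := by
      rw [← Real.exp_nat_mul]; push_cast; ring_nf
    have key : Real.exp (δ₀ * (n' : ℝ)) * Real.exp (lam * ((n : ℝ) + 1))
        = Real.exp lam * (Real.exp (δ₀ * m) * Real.exp (δ * n)) := by
      rw [← Real.exp_add, ← Real.exp_add, ← Real.exp_add, hcast]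
      congr 1
      simp only [hlam_def]; ring
    have step4 : A ^ 2 * Real.exp (δ₀ * n') * (Real.exp lam ^ (n + 1) / (Real.exp lam - 1))
        = K * Real.exp (δ₀ * m) * Real.exp (δ * n) := by
      rw [hp]
      calc A ^ 2 * Real.exp (δ₀ * n') * (Real.exp (lam * ((n : ℝ) + 1)) / (Real.exp lam - 1))
          = A ^ 2 / (Real.exp lam - 1)
            * (Real.exp (δ₀ * n') * Real.exp (lam * ((n : ℝ) + 1))) := by ring
        _ = A ^ 2 / (Real.exp lam - 1)
            * (Real.exp lam * (Real.exp (δ₀ * m) * Real.exp (δ * n))) := by rw [key]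
        _ = K * Real.exp (δ₀ * m) * Real.exp (δ * n) := by rw [hK_def]; ring
    calc _ ≤ _ := step1
      _ = _ := step2
      _ ≤ _ := step3
      _ = _ := step4
  -- bound the high part by the shifted b-sum
  have hhigh : (∑ k ∈ Finset.Ico (n + 1) (n' + 1), b k * c (n' - k))
      ≤ (A * Real.exp (δ₀ * m)) * ∑ k ∈ Finset.Ico (n + 1) (n' + 1), b k := by
    rw [Finset.mul_sum]
    apply Finset.sum_le_sum
    intro k hk
    simp only [Finset.mem_Ico] at hk
    have hle : c (n' - k) ≤ A * Real.exp (δ₀ * m) := by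
      refine (hcA _).trans ?_
      apply mul_le_mul_of_nonneg_left _ hA.le
      apply Real.exp_le_exp.mpr
      apply mul_le_mul_of_nonneg_left _ hδ₀.le
      have : n' - k ≤ m := by omega
      exact_mod_cast Nat.cast_le.mpr this
    calc b k * c (n' - k) ≤ b k * (A * Real.exp (δ₀ * m)) :=
          mul_le_mul_of_nonneg_left hle (hb k).le
      _ = A * Real.exp (δ₀ * m) * b k := by ring
  -- reindex
  have hreindex : (∑ k ∈ Finset.Ico (n + 1) (n' + 1), b k)
      = ∑ k ∈ Finset.Icc 1 m, b (n + k) := by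
    rw [show Finset.Icc 1 m = Finset.Ico 1 (m + 1) by rfl,
      Finset.sum_Ico_eq_sum_range, Finset.sum_Ico_eq_sum_range]
    have h1 : n' + 1 - (n + 1) = m := by omega
    have h2 : m + 1 - 1 = m := by omega
    rw [h1, h2]
    apply Finset.sum_congr rfl
    intro i _
    congr 1
    omega
  -- put it together
  have hconv' := hconv n'
  rw [hsplit] at hconv'
  set S : ℝ := ∑ k ∈ Finset.Icc 1 m, b (n + k) with hS_def
  rw [hreindex] at hhigh
  have hEn' : Real.exp (δ * n') = Real.exp (δ * n) * Real.exp (δ * m) := by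
    rw [← Real.exp_add, hcast]; ring_nf
  have hEm : Real.exp (δ * m) = Real.exp (lam * m) * Real.exp (δ₀ * m) := by
    rw [← Real.exp_add]; congr 1; simp only [hlam_def]; ring
  have e1 : (0:ℝ) < Real.exp (δ * n) := Real.exp_pos _
  have e2 : (0:ℝ) < Real.exp (δ₀ * m) := Real.exp_pos _
  have e3 : (0:ℝ) < Real.exp (lam * m) := Real.exp_pos _
  rw [hEn', hEm] at hconv'
  have hconv2 : Real.exp (δ * n) * (Real.exp (lam * m) * Real.exp (δ₀ * m))
      ≤ A * ((∑ k ∈ Finset.range (n + 1), b k * c (n' - k))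
        + ∑ k ∈ Finset.Ico (n + 1) (n' + 1), b k * c (n' - k)) := by
    have h := mul_le_mul_of_nonneg_left hconv' hA.le
    calc Real.exp (δ * n) * (Real.exp (lam * m) * Real.exp (δ₀ * m))
        = A * (A⁻¹ * (Real.exp (δ * n) * (Real.exp (lam * m) * Real.exp (δ₀ * m)))) := by
          field_simp
      _ ≤ _ := h
  have hlowA := mul_le_mul_of_nonneg_left hlow hA.le
  have hhighA := mul_le_mul_of_nonneg_left hhigh hA.le
  have hkeyE := mul_le_mul_of_nonneg_right hkey (mul_pos e2 e1).le
  have h2 : Real.exp (lam * m) * Real.exp (δ * n) * Real.exp (δ₀ * m)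
      ≤ 2 * A ^ 2 * S * Real.exp (δ₀ * m) := by nlinarith
  have h3 : Real.exp (lam * m) * Real.exp (δ * n) ≤ 2 * A ^ 2 * S :=
    le_of_mul_le_mul_right (by linarith) e2
  rw [div_mul_eq_mul_div, div_le_iff₀ (by positivity)]
  linarith
end

section
/- Let X be a CAT(0) space and C ⊂ X a closed convex subset. Suppose that for some σ' ≥ 0, whenever x ∈ X and y₁, y₂ ∈ C with π_C(x) ∈ [y₁,y₂], the triangle [x,y₁] ∪ [y₁,y₂] ∪ [y₂,x] is σ'-slim. Then dist(π_C(x), [x,y]) ≤ 2σ' for all x ∈ X and y ∈ C. -/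
open Set Metric

/-- `γ` is a unit-speed geodesic on the interval `[a,b]`. -/
def IsGeodesicOn {X : Type*} [MetricSpace X] (γ : ℝ → X) (a b : ℝ) : Prop :=
  ∀ s ∈ Set.Icc a b, ∀ t ∈ Set.Icc a b, dist (γ s) (γ t) = |s - t|

/-- `γ` is a unit-speed geodesic from `x` to `y`, parametrized on `[0, dist x y]`. -/
def GeodFromTo {X : Type*} [MetricSpace X] (γ : ℝ → X) (x y : X) : Prop :=
  IsGeodesicOn γ 0 (dist x y) ∧ γ 0 = x ∧ γ (dist x y) = y

/-- The geodesic segment traced by a geodesic `γ` from `x` to `y`. -/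
def geodSeg {X : Type*} [MetricSpace X] (γ : ℝ → X) (x y : X) : Set X :=
  γ '' Set.Icc 0 (dist x y)

/-- A CAT(0) space: a geodesic metric space satisfying the CN (Bruhat--Tits)
midpoint inequality, which characterizes CAT(0) among geodesic spaces. -/
class CAT0 (X : Type*) [MetricSpace X] : Prop where
  geodesic : ∀ x y : X, ∃ γ : ℝ → X, GeodFromTo γ x y
  cn : ∀ x y z m : X, dist y m = dist y z / 2 → dist m z = dist y z / 2 →
    dist x m ^ 2 ≤ (dist x y ^ 2 + dist x z ^ 2) / 2 - dist y z ^ 2 / 4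

/-- A subset is (geodesically) convex if it contains every geodesic between its points. -/
def GeodConvex {X : Type*} [MetricSpace X] (C : Set X) : Prop :=
  ∀ γ : ℝ → X, ∀ a b : ℝ, a ≤ b → IsGeodesicOn γ a b → γ a ∈ C → γ b ∈ C →
    ∀ t ∈ Set.Icc a b, γ t ∈ C

/-- `p` is the closest point projection onto `C`. -/
def IsClosestPointProj {X : Type*} [MetricSpace X] (C : Set X) (p : X → X) : Prop :=
  ∀ x : X, p x ∈ C ∧ ∀ z ∈ C, dist x (p x) ≤ dist x z

/-- `ℓ` is a (complete, unit-speed) geodesic line. -/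
def IsGeodLine {X : Type*} [MetricSpace X] (ℓ : ℝ → X) : Prop :=
  ∀ s t : ℝ, dist (ℓ s) (ℓ t) = |s - t|

/-- A geodesic triangle with sides `S₁, S₂, S₃` is `σ'`-slim if each side is contained
in the `σ'`-neighborhood of the union of the other two. -/
def SlimTri {X : Type*} [MetricSpace X] (σ' : ℝ) (S₁ S₂ S₃ : Set X) : Prop :=
  (∀ z ∈ S₁, Metric.infDist z (S₂ ∪ S₃) ≤ σ') ∧
  (∀ z ∈ S₂, Metric.infDist z (S₁ ∪ S₃) ≤ σ') ∧
  (∀ z ∈ S₃, Metric.infDist z (S₁ ∪ S₂) ≤ σ')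

/-- Theorem 3.1, (4) ⇒ (3): if every triangle `[x,y₁] ∪ [y₁,y₂] ∪ [y₂,x]` with
`y₁, y₂ ∈ C` and `π_C x ∈ [y₁,y₂]` is `σ'`-slim, then
`dist (π_C x) [x,y] ≤ 2σ'` for all `x ∈ X` and `y ∈ C`. -/
theorem proj_close_of_slim
    {X : Type*} [MetricSpace X] [CAT0 X]
    (C : Set X) (hclosed : IsClosed C) (hconv : GeodConvex C)
    (p : X → X) (hp : IsClosestPointProj C p)
    (σ' : ℝ) (hσ' : 0 ≤ σ')
    (hslim : ∀ x : X, ∀ y₁ ∈ C, ∀ y₂ ∈ C, ∀ γ₁ γ₀ γ₂ : ℝ → X,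
      GeodFromTo γ₁ x y₁ → GeodFromTo γ₀ y₁ y₂ → GeodFromTo γ₂ y₂ x →
      p x ∈ geodSeg γ₀ y₁ y₂ →
      SlimTri σ' (geodSeg γ₁ x y₁) (geodSeg γ₀ y₁ y₂) (geodSeg γ₂ y₂ x)) :
    ∀ x : X, ∀ y ∈ C, ∀ γ : ℝ → X, GeodFromTo γ x y →
      Metric.infDist (p x) (geodSeg γ x y) ≤ 2 * σ' := by
  intro x y hy γ hγ
  obtain ⟨hpC, hpmin⟩ := hp x
  obtain ⟨γ₁, hγ₁⟩ := CAT0.geodesic x (p x)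
  obtain ⟨γ₀, hγ₀⟩ := CAT0.geodesic (p x) y
  set D := dist x y with hD
  set γ₂ : ℝ → X := fun t => γ (D - t) with hγ₂def
  have hDyx : dist y x = D := dist_comm y x
  have hγ₂ : GeodFromTo γ₂ y x := by
    refine ⟨?_, ?_, ?_⟩
    · intro s hs t ht
      rw [hDyx] at hs ht
      have h := hγ.1 (D - s) ⟨by linarith [hs.2], by linarith [hs.1]⟩
        (D - t) ⟨by linarith [ht.2], by linarith [ht.1]⟩
      rw [show D - s - (D - t) = -(s - t) by ring, abs_neg] at h
      exact h
    · show γ (D - 0) = y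
      rw [sub_zero]; exact hγ.2.2
    · show γ (D - dist y x) = x
      rw [hDyx, sub_self]; exact hγ.2.1
  have hseg : geodSeg γ₂ y x = geodSeg γ x y := by
    unfold geodSeg
    rw [hDyx, ← hD]
    have : (fun t => γ (D - t)) '' Set.Icc 0 D = γ '' ((fun t => D - t) '' Set.Icc 0 D) := by
      rw [Set.image_image]
    rw [this, Set.image_const_sub_Icc, sub_zero, sub_self]
  have h0 : p x ∈ geodSeg γ₀ (p x) y := ⟨0, ⟨le_refl 0, dist_nonneg⟩, hγ₀.2.1⟩
  have hS := (hslim x (p x) hpC y hy γ₁ γ₀ γ₂ hγ₁ hγ₀ hγ₂ h0).1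
  set T := dist x (p x) with hT
  -- key: points on [x, p x] at parameter s are at distance ≥ T - s from C
  have hkey : ∀ s ∈ Set.Icc (0:ℝ) T, ∀ c ∈ C, T - s ≤ dist (γ₁ s) c := by
    intro s hs c hc
    have h1 : T ≤ dist x c := hpmin c hc
    have h2 : dist x c ≤ dist x (γ₁ s) + dist (γ₁ s) c := dist_triangle _ _ _
    have h3 : dist x (γ₁ s) = s := by
      have h := hγ₁.1 0 ⟨le_refl 0, dist_nonneg⟩ s hs
      rw [hγ₁.2.1] at h
      rw [h, zero_sub, abs_neg, abs_of_nonneg hs.1]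
    linarith
  apply le_of_forall_pos_le_add
  intro ε hε
  set e := ε / 3 with he
  have he3 : 0 < e := by positivity
  by_cases hTb : T < σ' + 2 * e
  · have hx : x ∈ geodSeg γ x y := ⟨0, ⟨le_refl 0, dist_nonneg⟩, hγ.2.1⟩
    have h1 : Metric.infDist (p x) (geodSeg γ x y) ≤ dist (p x) x :=
      Metric.infDist_le_dist_of_mem hx
    rw [dist_comm] at h1
    linarith
  · push_neg at hTb
    set s := T - (σ' + 2 * e) with hs
    have hsmem : s ∈ Set.Icc (0:ℝ) T := ⟨by linarith, by linarith⟩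
    have hz : γ₁ s ∈ geodSeg γ₁ x (p x) := ⟨s, hsmem, rfl⟩
    have hdist := hS (γ₁ s) hz
    have hne : (geodSeg γ₀ (p x) y ∪ geodSeg γ₂ y x).Nonempty :=
      ⟨p x, Or.inl h0⟩
    have hlt : Metric.infDist (γ₁ s) (geodSeg γ₀ (p x) y ∪ geodSeg γ₂ y x) < σ' + e :=
      lt_of_le_of_lt hdist (by linarith)
    obtain ⟨w, hw, hzw⟩ := (Metric.infDist_lt_iff hne).1 hlt
    have hzq : dist (γ₁ s) (p x) = σ' + 2 * e := by
      have h := hγ₁.1 s hsmem T ⟨dist_nonneg, le_refl T⟩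
      rw [hγ₁.2.2] at h
      rw [h, abs_of_nonpos (by linarith : s - T ≤ 0)]
      simp [hs]
    cases hw with
    | inl hw2 =>
      exfalso
      obtain ⟨r, hr, rfl⟩ := hw2
      have hwC : γ₀ r ∈ C := by
        refine hconv γ₀ 0 (dist (p x) y) dist_nonneg hγ₀.1 ?_ ?_ r hr
        · rw [hγ₀.2.1]; exact hpC
        · rw [hγ₀.2.2]; exact hy
      have := hkey s hsmem (γ₀ r) hwC
      linarith
    | inr hw3 =>
      rw [hseg] at hw3
      have h1 : Metric.infDist (p x) (geodSeg γ x y) ≤ dist (p x) w :=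
        Metric.infDist_le_dist_of_mem hw3
      have h2 : dist (p x) w ≤ dist (p x) (γ₁ s) + dist (γ₁ s) w := dist_triangle _ _ _
      rw [dist_comm] at hzq
      linarith
end

section
/- Let X be a CAT(0) space, C ⊂ X closed convex with projection π_C, and suppose dist(π_C(x), [x,y]) ≤ σ for all x ∈ X and y ∈ C. Then for any x ∈ X and any y in the ε-neighborhood of C: (a) dist(π_C(x), [x,y]) < ε + σ, and (b) dist(x,y) > dist(x, π_C(x)) + dist(π_C(x), y) − 2ε − 2σ. -/
open Set Metric

section AuxCAT0

variable {X : Type*} [MetricSpace X] [CAT0 X]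

/-- Midpoints exist in a CAT(0) space. -/
lemma CAT0.exists_midpt (a b : X) :
    ∃ q : X, dist a q = dist a b / 2 ∧ dist q b = dist a b / 2 := by
  obtain ⟨γ, hg, h0, h1⟩ := CAT0.geodesic a b
  have hd : (0 : ℝ) ≤ dist a b := dist_nonneg
  have hmem0 : (0 : ℝ) ∈ Set.Icc 0 (dist a b) := ⟨le_refl _, hd⟩
  have hmemm : dist a b / 2 ∈ Set.Icc 0 (dist a b) := ⟨by linarith, by linarith⟩
  have hmem1 : dist a b ∈ Set.Icc 0 (dist a b) := ⟨hd, le_refl _⟩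
  refine ⟨γ (dist a b / 2), ?_, ?_⟩
  · have h := hg 0 hmem0 (dist a b / 2) hmemm
    rw [h0] at h
    rw [h, abs_of_nonpos (by linarith)]; ring
  · have h := hg (dist a b / 2) hmemm (dist a b) hmem1
    rw [h1] at h
    rw [h, abs_of_nonpos (by linarith)]; ring

/-- CN inequality: midpoints of two geodesics from a common point. -/
lemma CAT0.cn_mid (a b b' m q : X)
    (h1 : dist a m = dist a b / 2) (h2 : dist m b = dist a b / 2)
    (h3 : dist a q = dist a b' / 2) (h4 : dist q b' = dist a b' / 2) :
    dist m q ≤ dist b b' / 2 := by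
  have hcn1 := CAT0.cn b' a b m h1 h2
  have hcn2 := CAT0.cn m a b' q h3 h4
  have hma : dist m a = dist a b / 2 := by rw [dist_comm]; exact h1
  have hmb' : dist m b' = dist b' m := dist_comm _ _
  have hba : dist b' a = dist a b' := dist_comm _ _
  have hbb : dist b' b = dist b b' := dist_comm _ _
  rw [hma, hmb'] at hcn2
  rw [hba, hbb] at hcn1
  have hsq : dist m q ^ 2 ≤ (dist b b' / 2) ^ 2 := by nlinarith
  nlinarith [dist_nonneg (x := m) (y := q), dist_nonneg (x := b) (y := b')]

/-- CN inequality: midpoints of two geodesics. -/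
lemma CAT0.mid4 (a b a' b' m m' : X)
    (h1 : dist a m = dist a b / 2) (h2 : dist m b = dist a b / 2)
    (h3 : dist a' m' = dist a' b' / 2) (h4 : dist m' b' = dist a' b' / 2) :
    dist m m' ≤ (dist a a' + dist b b') / 2 := by
  obtain ⟨q, hq1, hq2⟩ := CAT0.exists_midpt a b'
  have A : dist m q ≤ dist b b' / 2 := CAT0.cn_mid a b b' m q h1 h2 hq1 hq2
  have B : dist q m' ≤ dist a a' / 2 := by
    refine CAT0.cn_mid b' a a' q m' ?_ ?_ ?_ ?_
    · rw [dist_comm b' q, dist_comm b' a]; exact hq2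
    · rw [dist_comm b' a, dist_comm q a]; exact hq1
    · rw [dist_comm b' m', dist_comm b' a']; exact h4
    · rw [dist_comm b' a', dist_comm m' a']; exact h3
  calc dist m m' ≤ dist m q + dist q m' := dist_triangle _ _ _
    _ ≤ (dist a a' + dist b b') / 2 := by linarith

/-- Midpoint step for the convexity of distance between two geodesics from `x`. -/
lemma CAT0.geod_mid_step (γ γ' : ℝ → X) (x y y' : X)
    (hγ : GeodFromTo γ x y) (hγ' : GeodFromTo γ' x y') (s t : ℝ)
    (hs0 : 0 ≤ s) (hs1 : s ≤ 1) (ht0 : 0 ≤ t) (ht1 : t ≤ 1)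
    (h1 : dist (γ (s * dist x y)) (γ' (s * dist x y')) ≤ s * dist y y')
    (h2 : dist (γ (t * dist x y)) (γ' (t * dist x y')) ≤ t * dist y y') :
    dist (γ (((s + t) / 2) * dist x y)) (γ' (((s + t) / 2) * dist x y')) ≤
      ((s + t) / 2) * dist y y' := by
  have hd : (0 : ℝ) ≤ dist x y := dist_nonneg
  have hd' : (0 : ℝ) ≤ dist x y' := dist_nonneg
  have hu0 : 0 ≤ (s + t) / 2 := by linarith
  have hu1 : (s + t) / 2 ≤ 1 := by linarith
  have mem : ∀ u : ℝ, 0 ≤ u → u ≤ 1 → ∀ e : ℝ, 0 ≤ e → u * e ∈ Set.Icc 0 e :=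
    fun u h h' e he => ⟨by positivity, by nlinarith⟩
  have ham : dist (γ (s * dist x y)) (γ (((s + t) / 2) * dist x y)) =
      dist (γ (s * dist x y)) (γ (t * dist x y)) / 2 := by
    rw [hγ.1 _ (mem s hs0 hs1 _ hd) _ (mem _ hu0 hu1 _ hd),
        hγ.1 _ (mem s hs0 hs1 _ hd) _ (mem t ht0 ht1 _ hd),
        show s * dist x y - ((s + t) / 2) * dist x y = ((s - t) * dist x y) / 2 by ring,
        show s * dist x y - t * dist x y = (s - t) * dist x y by ring,
        abs_div, abs_mul, abs_of_nonneg hd]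
    norm_num
  have hmb : dist (γ (((s + t) / 2) * dist x y)) (γ (t * dist x y)) =
      dist (γ (s * dist x y)) (γ (t * dist x y)) / 2 := by
    rw [hγ.1 _ (mem _ hu0 hu1 _ hd) _ (mem t ht0 ht1 _ hd),
        hγ.1 _ (mem s hs0 hs1 _ hd) _ (mem t ht0 ht1 _ hd),
        show ((s + t) / 2) * dist x y - t * dist x y = ((s - t) * dist x y) / 2 by ring,
        show s * dist x y - t * dist x y = (s - t) * dist x y by ring,
        abs_div, abs_mul, abs_of_nonneg hd]
    norm_num
  have ham' : dist (γ' (s * dist x y')) (γ' (((s + t) / 2) * dist x y')) =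
      dist (γ' (s * dist x y')) (γ' (t * dist x y')) / 2 := by
    rw [hγ'.1 _ (mem s hs0 hs1 _ hd') _ (mem _ hu0 hu1 _ hd'),
        hγ'.1 _ (mem s hs0 hs1 _ hd') _ (mem t ht0 ht1 _ hd'),
        show s * dist x y' - ((s + t) / 2) * dist x y' = ((s - t) * dist x y') / 2 by ring,
        show s * dist x y' - t * dist x y' = (s - t) * dist x y' by ring,
        abs_div, abs_mul, abs_of_nonneg hd']
    norm_num
  have hmb' : dist (γ' (((s + t) / 2) * dist x y')) (γ' (t * dist x y')) =
      dist (γ' (s * dist x y')) (γ' (t * dist x y')) / 2 := by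
    rw [hγ'.1 _ (mem _ hu0 hu1 _ hd') _ (mem t ht0 ht1 _ hd'),
        hγ'.1 _ (mem s hs0 hs1 _ hd') _ (mem t ht0 ht1 _ hd'),
        show ((s + t) / 2) * dist x y' - t * dist x y' = ((s - t) * dist x y') / 2 by ring,
        show s * dist x y' - t * dist x y' = (s - t) * dist x y' by ring,
        abs_div, abs_mul, abs_of_nonneg hd']
    norm_num
  have key := CAT0.mid4 (γ (s * dist x y)) (γ (t * dist x y))
    (γ' (s * dist x y')) (γ' (t * dist x y'))
    (γ (((s + t) / 2) * dist x y)) (γ' (((s + t) / 2) * dist x y'))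
    ham hmb ham' hmb'
  calc dist (γ (((s + t) / 2) * dist x y)) (γ' (((s + t) / 2) * dist x y'))
      ≤ (dist (γ (s * dist x y)) (γ' (s * dist x y')) +
         dist (γ (t * dist x y)) (γ' (t * dist x y'))) / 2 := key
    _ ≤ ((s + t) / 2) * dist y y' := by linarith

/-- Convexity of the distance between geodesics from a common point, at dyadic parameters. -/
lemma CAT0.geod_dyadic (γ γ' : ℝ → X) (x y y' : X)
    (hγ : GeodFromTo γ x y) (hγ' : GeodFromTo γ' x y') :
    ∀ n k : ℕ, k ≤ 2 ^ n →
      dist (γ (((k : ℝ) / 2 ^ n) * dist x y)) (γ' (((k : ℝ) / 2 ^ n) * dist x y')) ≤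
        ((k : ℝ) / 2 ^ n) * dist y y' := by
  intro n
  induction n with
  | zero =>
    intro k hk
    interval_cases k
    · norm_num [hγ.2.1, hγ'.2.1]
    · norm_num [hγ.2.2, hγ'.2.2]
  | succ n ih =>
    intro k hk
    have hp2 : (2 : ℕ) ^ (n + 1) = 2 * 2 ^ n := by rw [pow_succ]; ring
    set j : ℕ := k / 2 with hjdef
    set j' : ℕ := k - j with hjdef'
    have hj : j ≤ 2 ^ n := by omega
    have hj' : j' ≤ 2 ^ n := by omega
    have hjj' : j + j' = k := by omega
    have hcast : (((j : ℝ) / 2 ^ n) + ((j' : ℝ) / 2 ^ n)) / 2 = (k : ℝ) / 2 ^ (n + 1) := by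
      have : (j : ℝ) + (j' : ℝ) = (k : ℝ) := by exact_mod_cast congrArg (Nat.cast (R := ℝ)) hjj'
      rw [← add_div, this, pow_succ, ← div_div]
    have hb1 : (0 : ℝ) ≤ (j : ℝ) / 2 ^ n := by positivity
    have hb2 : (j : ℝ) / 2 ^ n ≤ 1 := by
      rw [div_le_one (by positivity)]
      exact_mod_cast hj
    have hb3 : (0 : ℝ) ≤ (j' : ℝ) / 2 ^ n := by positivity
    have hb4 : (j' : ℝ) / 2 ^ n ≤ 1 := by
      rw [div_le_one (by positivity)]
      exact_mod_cast hj'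
    have hkey := CAT0.geod_mid_step γ γ' x y y' hγ hγ'
      ((j : ℝ) / 2 ^ n) ((j' : ℝ) / 2 ^ n) hb1 hb2 hb3 hb4 (ih j hj) (ih j' hj')
    rwa [hcast] at hkey

end AuxCAT0

/-- Proposition 3.3(1): if `C` satisfies the projection condition with constant `σ`,
then for `x ∈ X` and `y` in the `ε`-neighborhood of `C`:
(a) `dist (π_C x) [x,y] < ε + σ`, and
(b) `dist x y > dist x (π_C x) + dist (π_C x) y - 2ε - 2σ`. -/
theorem proj_estimates_near_Morse
    {X : Type*} [MetricSpace X] [CAT0 X]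
    (C : Set X) (hclosed : IsClosed C) (hconv : GeodConvex C) (hCne : C.Nonempty)
    (p : X → X) (hp : IsClosestPointProj C p)
    (σ : ℝ) (hσ : 0 ≤ σ)
    (hproj : ∀ x : X, ∀ y ∈ C, ∀ γ : ℝ → X, GeodFromTo γ x y →
      Metric.infDist (p x) (geodSeg γ x y) ≤ σ)
    (ε : ℝ) (hε : 0 < ε)
    (x y : X) (hy : Metric.infDist y C < ε)
    (γ : ℝ → X) (hγ : GeodFromTo γ x y) :
    Metric.infDist (p x) (geodSeg γ x y) < ε + σ ∧
    dist x (p x) + dist (p x) y - 2 * ε - 2 * σ < dist x y := by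
  have hd : (0 : ℝ) ≤ dist x y := dist_nonneg
  have hxseg : x ∈ geodSeg γ x y := ⟨0, ⟨le_refl _, hd⟩, hγ.2.1⟩
  have hsegne : (geodSeg γ x y).Nonempty := ⟨x, hxseg⟩
  obtain ⟨y', hy'C, hyy'⟩ := (Metric.infDist_lt_iff hCne).mp hy
  have hc0 : (0 : ℝ) ≤ dist y y' := dist_nonneg
  obtain ⟨γ'', hγ''⟩ := CAT0.geodesic x y'
  have hps : Metric.infDist (p x) (geodSeg γ'' x y') ≤ σ := hproj x y' hy'C γ'' hγ''
  have hd'0 : (0 : ℝ) ≤ dist x y' := dist_nonneg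
  have ha : Metric.infDist (p x) (geodSeg γ x y) < ε + σ := by
    rcases eq_or_lt_of_le hd'0 with hzero | hpos
    · -- degenerate case `x = y'`
      have hle : dist x (p x) ≤ dist x y' := (hp x).2 y' hy'C
      have hpx : dist (p x) x = 0 := by
        rw [dist_comm]; exact le_antisymm (by rw [← hzero] at hle; exact hle) dist_nonneg
      calc Metric.infDist (p x) (geodSeg γ x y) ≤ dist (p x) x :=
            Metric.infDist_le_dist_of_mem hxseg
        _ = 0 := hpx
        _ < ε + σ := by linarith
    · set δ : ℝ := (ε - dist y y') / 2 with hδdef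
      have hδ0 : 0 < δ := by rw [hδdef]; linarith
      have hlt : Metric.infDist (p x) (geodSeg γ'' x y') < σ + δ :=
        lt_of_le_of_lt hps (by linarith)
      have hne' : (geodSeg γ'' x y').Nonempty := ⟨x, 0, ⟨le_refl _, hd'0⟩, hγ''.2.1⟩
      obtain ⟨w, hw, hwlt⟩ := (Metric.infDist_lt_iff hne').mp hlt
      obtain ⟨t, htmem, rfl⟩ := hw
      set s : ℝ := t / dist x y' with hsdef
      have hs0 : 0 ≤ s := div_nonneg htmem.1 hd'0
      have hs1 : s ≤ 1 := (div_le_one hpos).mpr htmem.2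
      have hts : t = s * dist x y' := (div_mul_cancel₀ t (ne_of_gt hpos)).symm
      have H : ∀ n : ℕ, Metric.infDist (p x) (geodSeg γ x y) ≤
          (dist (p x) (γ'' t) + dist y y') + dist x y' * (1 / 2) ^ n := by
        intro n
        set k : ℕ := ⌊s * 2 ^ n⌋₊ with hkdef
        have h2n : (0 : ℝ) < 2 ^ n := by positivity
        have hkle : (k : ℝ) ≤ s * 2 ^ n := Nat.floor_le (by positivity)
        have hklt : s * 2 ^ n < (k : ℝ) + 1 := Nat.lt_floor_add_one _
        have hk2 : k ≤ 2 ^ n := by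
          have hcast : (k : ℝ) ≤ 2 ^ n := by nlinarith
          exact_mod_cast hcast
        set sn : ℝ := (k : ℝ) / 2 ^ n with hsn
        have hsn0 : 0 ≤ sn := by positivity
        have hsnle : sn ≤ s := by rw [hsn, div_le_iff₀ h2n]; linarith
        have hsn1 : sn ≤ 1 := le_trans hsnle hs1
        have hgap : s - sn ≤ (1 / 2 : ℝ) ^ n := by
          rw [one_div_pow, sub_le_iff_le_add, hsn, ← add_div, le_div_iff₀ h2n]
          linarith
        have hmem : γ (sn * dist x y) ∈ geodSeg γ x y :=
          ⟨sn * dist x y, ⟨mul_nonneg hsn0 hd, by nlinarith⟩, rfl⟩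
        have hdy := CAT0.geod_dyadic γ'' γ x y' y hγ'' hγ n k hk2
        rw [← hsn] at hdy
        have hwmid : dist (γ'' t) (γ'' (sn * dist x y')) = (s - sn) * dist x y' := by
          rw [hγ''.1 t htmem (sn * dist x y')
              ⟨mul_nonneg hsn0 hd'0, by nlinarith⟩, hts,
            show s * dist x y' - sn * dist x y' = (s - sn) * dist x y' by ring,
            abs_of_nonneg (mul_nonneg (by linarith) hd'0)]
        have hcomm : dist y' y = dist y y' := dist_comm _ _
        calc Metric.infDist (p x) (geodSeg γ x y) ≤ dist (p x) (γ (sn * dist x y)) :=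
              Metric.infDist_le_dist_of_mem hmem
          _ ≤ dist (p x) (γ'' t) + dist (γ'' t) (γ'' (sn * dist x y')) +
              dist (γ'' (sn * dist x y')) (γ (sn * dist x y)) := dist_triangle4 _ _ _ _
          _ ≤ dist (p x) (γ'' t) + (s - sn) * dist x y' + sn * dist y y' := by
              rw [hwmid]; rw [hcomm] at hdy; linarith
          _ ≤ (dist (p x) (γ'' t) + dist y y') + dist x y' * (1 / 2) ^ n := by
              have e1 : sn * dist y y' ≤ dist y y' := by nlinarith
              have e2 : (s - sn) * dist x y' ≤ dist x y' * (1 / 2) ^ n := by nlinarith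
              linarith
      have hlim : Metric.infDist (p x) (geodSeg γ x y) ≤ dist (p x) (γ'' t) + dist y y' := by
        have htend : Filter.Tendsto
            (fun n : ℕ => (dist (p x) (γ'' t) + dist y y') + dist x y' * (1 / 2) ^ n)
            Filter.atTop
            (nhds ((dist (p x) (γ'' t) + dist y y') + dist x y' * 0)) :=
          Filter.Tendsto.const_add _
            ((tendsto_pow_atTop_nhds_zero_of_lt_one (by norm_num) (by norm_num)).const_mul
              (dist x y'))
        have := ge_of_tendsto htend (Filter.Eventually.of_forall H)
        simpa using this
      calc Metric.infDist (p x) (geodSeg γ x y) ≤ dist (p x) (γ'' t) + dist y y' := hlim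
        _ < (σ + δ) + dist y y' := by linarith
        _ < ε + σ := by rw [hδdef]; linarith
  refine ⟨ha, ?_⟩
  obtain ⟨w2, hw2mem, hw2lt⟩ := (Metric.infDist_lt_iff hsegne).mp ha
  obtain ⟨u, humem, rfl⟩ := hw2mem
  have h1 : dist x (γ u) = u := by
    have h := hγ.1 0 ⟨le_refl _, hd⟩ u humem
    rw [hγ.2.1] at h
    rw [h, zero_sub, abs_neg, abs_of_nonneg humem.1]
  have h2 : dist (γ u) y = dist x y - u := by
    have h := hγ.1 u humem (dist x y) ⟨hd, le_refl _⟩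
    rw [hγ.2.2] at h
    rw [h, abs_of_nonpos (by linarith [humem.2])]
    ring
  have t1 : dist x (p x) ≤ u + dist (p x) (γ u) := by
    have h := dist_triangle x (γ u) (p x)
    rw [h1, dist_comm (γ u) (p x)] at h
    exact h
  have t2 : dist (p x) y ≤ dist (p x) (γ u) + (dist x y - u) := by
    have h := dist_triangle (p x) (γ u) y
    rw [h2] at h
    exact h
  linarith
end

section
/- Let X be a CAT(0) space, C ⊂ X closed convex satisfying dist(π_C(x), [x,y]) ≤ σ for all x ∈ X, y ∈ C. Then for any x ∈ X and y in the ε-neighborhood of C, the first point of intersection of the geodesic [x,y] with the closed (ε+σ)-neighborhood of C lies within distance 3ε + 3σ of π_C(x). -/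
open Set Metric

lemma cn_apex {X : Type*} [MetricSpace X] [CAT0 X] (x y z m₁ m₂ : X)
    (h1a : dist x m₁ = dist x y / 2) (h1b : dist m₁ y = dist x y / 2)
    (h2a : dist x m₂ = dist x z / 2) (h2b : dist m₂ z = dist x z / 2) :
    dist m₁ m₂ ≤ dist y z / 2 := by
  have A := CAT0.cn m₁ x z m₂ h2a h2b
  have B := CAT0.cn z x y m₁ h1a h1b
  rw [dist_comm m₁ x, h1a, dist_comm m₁ z] at A
  rw [dist_comm z x, dist_comm z y] at B
  have hd : (0:ℝ) ≤ dist y z := dist_nonneg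
  have hm : (0:ℝ) ≤ dist m₁ m₂ := dist_nonneg
  nlinarith [A, B, sq_nonneg (dist m₁ m₂ + dist y z / 2)]

lemma exists_midpoint {X : Type*} [MetricSpace X] [CAT0 X] (A B : X) :
    ∃ n : X, dist A n = dist A B / 2 ∧ dist n B = dist A B / 2 := by
  obtain ⟨g, hg, h0, h1⟩ := CAT0.geodesic A B
  have hd : 0 ≤ dist A B := dist_nonneg
  refine ⟨g (dist A B / 2), ?_, ?_⟩
  · have h := hg 0 ⟨le_refl _, hd⟩ (dist A B / 2) ⟨by linarith, by linarith⟩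
    rw [h0] at h
    rw [h, zero_sub, abs_neg, abs_of_nonneg (by linarith)]
  · have h := hg (dist A B / 2) ⟨by linarith, by linarith⟩ (dist A B) ⟨hd, le_refl _⟩
    rw [h1] at h
    rw [h, show dist A B / 2 - dist A B = -(dist A B / 2) by ring, abs_neg,
      abs_of_nonneg (by linarith)]

lemma midpoint_compare {X : Type*} [MetricSpace X] [CAT0 X]
    (A₁ B₁ A₂ B₂ m₁ m₂ : X)
    (h1a : dist A₁ m₁ = dist A₁ B₁ / 2) (h1b : dist m₁ B₁ = dist A₁ B₁ / 2)
    (h2a : dist A₂ m₂ = dist A₂ B₂ / 2) (h2b : dist m₂ B₂ = dist A₂ B₂ / 2) :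
    dist m₁ m₂ ≤ (dist A₁ A₂ + dist B₁ B₂) / 2 := by
  obtain ⟨n, hn1, hn2⟩ := exists_midpoint A₁ B₂
  have t1 : dist m₁ n ≤ dist B₁ B₂ / 2 := cn_apex A₁ B₁ B₂ m₁ n h1a h1b hn1 hn2
  have t2 : dist n m₂ ≤ dist A₁ A₂ / 2 := by
    refine cn_apex B₂ A₁ A₂ n m₂ ?_ ?_ ?_ ?_
    · rw [dist_comm B₂ n, dist_comm B₂ A₁]; exact hn2
    · rw [dist_comm n A₁, dist_comm B₂ A₁]; exact hn1
    · rw [dist_comm B₂ m₂, dist_comm B₂ A₂]; exact h2b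
    · rw [dist_comm m₂ A₂, dist_comm B₂ A₂]; exact h2a
  calc dist m₁ m₂ ≤ dist m₁ n + dist n m₂ := dist_triangle _ _ _
    _ ≤ (dist A₁ A₂ + dist B₁ B₂) / 2 := by linarith

lemma dist_geod_convex {X : Type*} [MetricSpace X] [CAT0 X] {γ γ' : ℝ → X} {x y q : X}
    (hg : GeodFromTo γ x y) (hg' : GeodFromTo γ' x q) {l : ℝ} (hl0 : 0 ≤ l) (hl1 : l ≤ 1) :
    dist (γ (l * dist x y)) (γ' (l * dist x q)) ≤ l * dist y q := by
  obtain ⟨hγi, hγ0, hγ1⟩ := hg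
  obtain ⟨hγ'i, hγ'0, hγ'1⟩ := hg'
  set d := dist x y with hd
  set d' := dist x q with hd'
  have hd0 : 0 ≤ d := dist_nonneg
  have hd'0 : 0 ≤ d' := dist_nonneg
  set f : ℝ → ℝ := fun a => dist (γ (a * d)) (γ' (a * d')) with hf
  have hmem : ∀ a : ℝ, 0 ≤ a → a ≤ 1 → a * d ∈ Icc 0 d := fun a h0 h1 =>
    ⟨mul_nonneg h0 hd0, mul_le_of_le_one_left hd0 h1⟩
  have hmem' : ∀ a : ℝ, 0 ≤ a → a ≤ 1 → a * d' ∈ Icc 0 d' := fun a h0 h1 =>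
    ⟨mul_nonneg h0 hd'0, mul_le_of_le_one_left hd'0 h1⟩
  have hdist : ∀ a b : ℝ, 0 ≤ a → a ≤ 1 → 0 ≤ b → b ≤ 1 →
      dist (γ (a * d)) (γ (b * d)) = |a - b| * d := by
    intro a b ha0 ha1 hb0 hb1
    rw [hγi _ (hmem a ha0 ha1) _ (hmem b hb0 hb1), ← sub_mul, abs_mul, abs_of_nonneg hd0]
  have hdist' : ∀ a b : ℝ, 0 ≤ a → a ≤ 1 → 0 ≤ b → b ≤ 1 →
      dist (γ' (a * d')) (γ' (b * d')) = |a - b| * d' := by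
    intro a b ha0 ha1 hb0 hb1
    rw [hγ'i _ (hmem' a ha0 ha1) _ (hmem' b hb0 hb1), ← sub_mul, abs_mul, abs_of_nonneg hd'0]
  have habsmid : ∀ a b : ℝ, |a - (a + b) / 2| = |a - b| / 2 := by
    intro a b
    rw [show a - (a + b) / 2 = (a - b) / 2 by ring, abs_div, abs_two]
  have habsmid2 : ∀ a b : ℝ, |(a + b) / 2 - b| = |a - b| / 2 := by
    intro a b
    rw [show (a + b) / 2 - b = (a - b) / 2 by ring, abs_div, abs_two]
  have hmid : ∀ a b : ℝ, 0 ≤ a → a ≤ 1 → 0 ≤ b → b ≤ 1 →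
      f ((a + b) / 2) ≤ (f a + f b) / 2 := by
    intro a b ha0 ha1 hb0 hb1
    have hm0 : 0 ≤ (a + b) / 2 := by linarith
    have hm1 : (a + b) / 2 ≤ 1 := by linarith
    have e1 : dist (γ (a * d)) (γ (((a + b) / 2) * d)) = dist (γ (a * d)) (γ (b * d)) / 2 := by
      rw [hdist a ((a + b) / 2) ha0 ha1 hm0 hm1, hdist a b ha0 ha1 hb0 hb1, habsmid]; ring
    have e2 : dist (γ (((a + b) / 2) * d)) (γ (b * d)) = dist (γ (a * d)) (γ (b * d)) / 2 := by
      rw [hdist ((a + b) / 2) b hm0 hm1 hb0 hb1, hdist a b ha0 ha1 hb0 hb1, habsmid2]; ring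
    have e1' : dist (γ' (a * d')) (γ' (((a + b) / 2) * d')) =
        dist (γ' (a * d')) (γ' (b * d')) / 2 := by
      rw [hdist' a ((a + b) / 2) ha0 ha1 hm0 hm1, hdist' a b ha0 ha1 hb0 hb1, habsmid]; ring
    have e2' : dist (γ' (((a + b) / 2) * d')) (γ' (b * d')) =
        dist (γ' (a * d')) (γ' (b * d')) / 2 := by
      rw [hdist' ((a + b) / 2) b hm0 hm1 hb0 hb1, hdist' a b ha0 ha1 hb0 hb1, habsmid2]; ring
    have := midpoint_compare (γ (a * d)) (γ (b * d)) (γ' (a * d')) (γ' (b * d'))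
      (γ (((a + b) / 2) * d)) (γ' (((a + b) / 2) * d')) e1 e2 e1' e2'
    simpa [hf] using this
  have hlip : ∀ a b : ℝ, 0 ≤ a → a ≤ 1 → 0 ≤ b → b ≤ 1 →
      f a ≤ f b + |a - b| * (d + d') := by
    intro a b ha0 ha1 hb0 hb1
    have t1 : dist (γ (a * d)) (γ' (a * d')) ≤
        dist (γ (a * d)) (γ (b * d)) + dist (γ (b * d)) (γ' (b * d'))
          + dist (γ' (b * d')) (γ' (a * d')) := dist_triangle4 _ _ _ _
    have e1 := hdist a b ha0 ha1 hb0 hb1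
    have e2 := hdist' b a hb0 hb1 ha0 ha1
    rw [abs_sub_comm b a] at e2
    simp only [hf]
    nlinarith [t1]
  have hf0 : f 0 = 0 := by
    simp only [hf, zero_mul, hγ0, hγ'0, dist_self]
  have hf1nn : 0 ≤ f 1 := dist_nonneg
  have hdyadic : ∀ n k : ℕ, k ≤ 2 ^ n → f ((k : ℝ) / 2 ^ n) ≤ ((k : ℝ) / 2 ^ n) * f 1 := by
    intro n
    induction n with
    | zero =>
      intro k hk
      interval_cases k
      · simpa using hf0.le
      · simp
    | succ n ih =>
      intro k hk
      have h2n : (0:ℝ) < 2 ^ n := by positivity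
      rcases Nat.even_or_odd k with ⟨j, hj⟩ | ⟨j, hj⟩
      · subst hj
        have hj2 : j ≤ 2 ^ n := by
          have : 2 ^ (n + 1) = 2 * 2 ^ n := by rw [pow_succ]; ring
          omega
        have hrep : ((j + j : ℕ) : ℝ) / 2 ^ (n + 1) = (j : ℝ) / 2 ^ n := by
          push_cast
          rw [pow_succ]
          field_simp
          ring
        rw [hrep]
        exact ih j hj2
      · subst hj
        have hjn : j + 1 ≤ 2 ^ n := by
          have : 2 ^ (n + 1) = 2 * 2 ^ n := by rw [pow_succ]; ring
          omega
        have ha := ih j (by omega)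
        have hb := ih (j + 1) hjn
        have ha0 : (0:ℝ) ≤ (j : ℝ) / 2 ^ n := by positivity
        have ha1 : (j : ℝ) / 2 ^ n ≤ 1 := by
          rw [div_le_one h2n]
          calc ((j:ℝ)) ≤ ((2^n : ℕ) : ℝ) := by exact_mod_cast Nat.le_of_succ_le hjn
            _ = (2:ℝ) ^ n := by push_cast; ring
        have hb0 : (0:ℝ) ≤ ((j + 1 : ℕ) : ℝ) / 2 ^ n := by positivity
        have hb1 : ((j + 1 : ℕ) : ℝ) / 2 ^ n ≤ 1 := by
          rw [div_le_one h2n]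
          calc (((j+1:ℕ)):ℝ) ≤ ((2^n : ℕ) : ℝ) := by exact_mod_cast hjn
            _ = (2:ℝ) ^ n := by push_cast; ring
        have hrep : ((2 * j + 1 : ℕ) : ℝ) / 2 ^ (n + 1) =
            ((j : ℝ) / 2 ^ n + ((j + 1 : ℕ) : ℝ) / 2 ^ n) / 2 := by
          push_cast
          rw [pow_succ]
          field_simp
          ring
        rw [hrep]
        have hm := hmid _ _ ha0 ha1 hb0 hb1
        calc f (((j : ℝ) / 2 ^ n + ((j + 1 : ℕ) : ℝ) / 2 ^ n) / 2)
            ≤ (f ((j : ℝ) / 2 ^ n) + f (((j + 1 : ℕ) : ℝ) / 2 ^ n)) / 2 := hm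
          _ ≤ (((j : ℝ) / 2 ^ n) * f 1 + (((j + 1 : ℕ) : ℝ) / 2 ^ n) * f 1) / 2 := by linarith
          _ = (((j : ℝ) / 2 ^ n + ((j + 1 : ℕ) : ℝ) / 2 ^ n) / 2) * f 1 := by ring
  have hgoal : f l ≤ l * f 1 := by
    refine le_of_forall_pos_le_add fun η hη => ?_
    obtain ⟨n, hn⟩ := pow_unbounded_of_one_lt ((d + d') / η) (one_lt_two (α := ℝ))
    have h2n : (0:ℝ) < 2 ^ n := by positivity
    set k := ⌊l * 2 ^ n⌋₊ with hk
    have hk_le : (k : ℝ) ≤ l * 2 ^ n := Nat.floor_le (by positivity)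
    have hk_lt : l * 2 ^ n < k + 1 := Nat.lt_floor_add_one _
    have ha_le : (k : ℝ) / 2 ^ n ≤ l := (div_le_iff₀ h2n).2 hk_le
    have ha0 : (0:ℝ) ≤ (k : ℝ) / 2 ^ n := by positivity
    have hkn : k ≤ 2 ^ n := by
      have h1 : (k : ℝ) ≤ ((2 ^ n : ℕ) : ℝ) := by
        push_cast
        nlinarith
      exact_mod_cast h1
    have hla : l - (k : ℝ) / 2 ^ n ≤ 1 / 2 ^ n := by
      rw [sub_le_iff_le_add, ← add_div, le_div_iff₀ h2n]
      linarith
    have key := hlip l ((k : ℝ) / 2 ^ n) hl0 hl1 ha0 (le_trans ha_le hl1)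
    have habs : |l - (k : ℝ) / 2 ^ n| = l - (k : ℝ) / 2 ^ n := abs_of_nonneg (by linarith)
    have hfa := hdyadic n k hkn
    have hη2 : (1 / 2 ^ n) * (d + d') ≤ η := by
      rw [div_mul_eq_mul_div, one_mul, div_le_iff₀ h2n]
      have := (div_lt_iff₀ hη).1 hn
      linarith
    have hmul : (l - (k : ℝ) / 2 ^ n) * (d + d') ≤ (1 / 2 ^ n) * (d + d') := by
      apply mul_le_mul_of_nonneg_right hla
      linarith
    have hmul2 : ((k : ℝ) / 2 ^ n) * f 1 ≤ l * f 1 :=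
      mul_le_mul_of_nonneg_right ha_le hf1nn
    rw [habs] at key
    linarith
  have hf1e : f 1 = dist y q := by
    simp only [hf, one_mul, hγ1, hγ'1]
  rw [hf1e] at hgoal
  exact hgoal

/-- Proposition 3.3(2): if `C` satisfies the projection condition with constant `σ`,
`x ∈ X` and `y` lies in the `ε`-neighborhood of `C`, then the first point of
intersection of the geodesic `[x,y]` with the closed `(ε+σ)`-neighborhood of `C`
lies within distance `3ε + 3σ` of `π_C x`. -/
theorem first_entrance_point_near_proj
    {X : Type*} [MetricSpace X] [CAT0 X]
    (C : Set X) (hclosed : IsClosed C) (hconv : GeodConvex C) (hCne : C.Nonempty)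
    (p : X → X) (hp : IsClosestPointProj C p)
    (σ : ℝ) (hσ : 0 ≤ σ)
    (hproj : ∀ x : X, ∀ y ∈ C, ∀ γ : ℝ → X, GeodFromTo γ x y →
      Metric.infDist (p x) (geodSeg γ x y) ≤ σ)
    (ε : ℝ) (hε : 0 < ε)
    (x y : X) (hy : Metric.infDist y C < ε)
    (γ : ℝ → X) (hγ : GeodFromTo γ x y) :
    dist (γ (sInf {t : ℝ | t ∈ Set.Icc 0 (dist x y) ∧ Metric.infDist (γ t) C ≤ ε + σ})) (p x)
      ≤ 3 * ε + 3 * σ := by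
  set d := dist x y with hdxy
  have hd0 : 0 ≤ d := dist_nonneg
  set S := {t : ℝ | t ∈ Icc 0 d ∧ infDist (γ t) C ≤ ε + σ} with hS
  have hdS : d ∈ S := ⟨⟨hd0, le_refl d⟩, by rw [hγ.2.2]; linarith [hy.le]⟩
  have hne : S.Nonempty := ⟨d, hdS⟩
  have hbdd : BddBelow S := ⟨0, fun t ht => ht.1.1⟩
  set t₀ := sInf S with ht₀
  have ht₀0 : 0 ≤ t₀ := le_csInf hne fun t ht => ht.1.1
  have ht₀d : t₀ ≤ d := csInf_le hbdd hdS
  have ht₀mem : t₀ ∈ Icc 0 d := ⟨ht₀0, ht₀d⟩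
  have hkey : infDist (γ t₀) C ≤ ε + σ := by
    refine le_of_forall_pos_le_add fun η hη => ?_
    obtain ⟨t, htS, htlt⟩ := Real.lt_sInf_add_pos hne hη
    have h1 : t₀ ≤ t := csInf_le hbdd htS
    have h2 : dist (γ t₀) (γ t) = |t₀ - t| := hγ.1 t₀ ht₀mem t htS.1
    calc infDist (γ t₀) C ≤ infDist (γ t) C + dist (γ t₀) (γ t) :=
          infDist_le_infDist_add_dist
      _ ≤ (ε + σ) + η := by
          rw [h2, abs_of_nonpos (by linarith)]
          have := htS.2
          linarith
  refine le_of_forall_pos_le_add fun η hη => ?_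
  obtain ⟨q, hqC, hqlt⟩ := (infDist_lt_iff hCne).1 hy
  by_cases hd' : dist x q = 0
  · rw [dist_eq_zero] at hd'
    have hxC : x ∈ C := hd' ▸ hqC
    have hpx : dist x (p x) ≤ 0 := by simpa using (hp x).2 x hxC
    have h0S : (0:ℝ) ∈ S := by
      refine ⟨⟨le_refl 0, hd0⟩, ?_⟩
      rw [hγ.2.1]
      have : infDist x C ≤ dist x x := infDist_le_dist_of_mem hxC
      simp at this
      linarith
    have ht0 : t₀ = 0 := le_antisymm (csInf_le hbdd h0S) ht₀0
    rw [ht0, hγ.2.1]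
    linarith
  · have hd'pos : 0 < dist x q := lt_of_le_of_ne dist_nonneg (Ne.symm hd')
    set d' := dist x q with hdq
    set δ := min (η / 3) (ε - dist y q) with hδ
    have hδpos : 0 < δ := lt_min (by linarith) (by linarith)
    have hδ1 : δ ≤ η / 3 := min_le_left _ _
    have hδ2 : δ ≤ ε - dist y q := min_le_right _ _
    obtain ⟨c, hcC, hclt⟩ := (infDist_lt_iff hCne).1
      (lt_of_le_of_lt hkey (by linarith : ε + σ < ε + σ + δ))
    obtain ⟨γ', hγ'⟩ := CAT0.geodesic x q
    have hseg := hproj x q hqC γ' hγ'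
    have hsegne : (geodSeg γ' x q).Nonempty := ⟨γ' 0, ⟨0, ⟨le_refl 0, dist_nonneg⟩, rfl⟩⟩
    obtain ⟨z, hzseg, hzlt⟩ := (infDist_lt_iff hsegne).1
      (lt_of_le_of_lt hseg (by linarith : σ < σ + δ))
    obtain ⟨s, hsmem, hzs⟩ := hzseg
    set l := s / d' with hl
    have hl0 : 0 ≤ l := div_nonneg hsmem.1 hd'pos.le
    have hl1 : l ≤ 1 := (div_le_one hd'pos).2 hsmem.2
    have hld' : l * d' = s := div_mul_cancel₀ s (ne_of_gt hd'pos)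
    have hconv2 := dist_geod_convex hγ hγ' hl0 hl1
    rw [← hdxy, ← hdq, hld', hzs] at hconv2
    have hdistxz : dist x z = s := by
      rw [← hzs, ← hγ'.2.1]
      rw [hγ'.1 0 ⟨le_refl 0, dist_nonneg⟩ s hsmem, zero_sub, abs_neg,
        abs_of_nonneg hsmem.1]
    have hxt₀ : dist x (γ t₀) = t₀ := by
      have h := hγ.1 0 ⟨le_refl 0, hd0⟩ t₀ ht₀mem
      rw [hγ.2.1] at h
      rw [h, zero_sub, abs_neg, abs_of_nonneg ht₀0]
    have hxpx_le : dist x (p x) ≤ t₀ + (ε + σ + δ) := by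
      calc dist x (p x) ≤ dist x c := (hp x).2 c hcC
        _ ≤ dist x (γ t₀) + dist (γ t₀) c := dist_triangle _ _ _
        _ ≤ t₀ + (ε + σ + δ) := by rw [hxt₀]; linarith
    have hs_le : s ≤ dist x (p x) + (σ + δ) := by
      rw [← hdistxz]
      calc dist x z ≤ dist x (p x) + dist (p x) z := dist_triangle _ _ _
        _ ≤ dist x (p x) + (σ + δ) := by linarith
    have hwpx : dist (γ (l * d)) (p x) ≤ l * dist y q + (σ + δ) := by
      calc dist (γ (l * d)) (p x) ≤ dist (γ (l * d)) z + dist z (p x) := dist_triangle _ _ _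
        _ ≤ l * dist y q + (σ + δ) := by rw [dist_comm z (p x)]; linarith
    have hmulq : l * dist y q ≤ dist y q := mul_le_of_le_one_left dist_nonneg hl1
    have hld_mem : l * d ∈ Icc 0 d := ⟨mul_nonneg hl0 hd0, mul_le_of_le_one_left hd0 hl1⟩
    have hwS : l * d ∈ S := by
      refine ⟨hld_mem, ?_⟩
      calc infDist (γ (l * d)) C ≤ dist (γ (l * d)) (p x) := infDist_le_dist_of_mem (hp x).1
        _ ≤ l * dist y q + (σ + δ) := hwpx
        _ ≤ ε + σ := by linarith
    have ht₀_le : t₀ ≤ l * d := csInf_le hbdd hwS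
    have hld_le : l * d ≤ s + dist y q := by
      have hdd' : d ≤ d' + dist y q := by
        rw [hdxy, hdq]
        calc dist x y ≤ dist x q + dist q y := dist_triangle _ _ _
          _ = dist x q + dist y q := by rw [dist_comm q y]
      calc l * d ≤ l * (d' + dist y q) := mul_le_mul_of_nonneg_left hdd' hl0
        _ = s + l * dist y q := by rw [mul_add, hld']
        _ ≤ s + dist y q := by linarith
    have hstep : dist (γ t₀) (γ (l * d)) = l * d - t₀ := by
      rw [hγ.1 t₀ ht₀mem (l * d) hld_mem, abs_of_nonpos (by linarith)]
      ring
    calc dist (γ t₀) (p x) ≤ dist (γ t₀) (γ (l * d)) + dist (γ (l * d)) (p x) :=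
          dist_triangle _ _ _
      _ ≤ 3 * ε + 3 * σ + η := by rw [hstep]; linarith
end

section
/- Let X be a proper CAT(0) space and C ⊂ X a closed convex Morse subset with projection constant σ (as in Theorem 3.1(3)). If ℓ : ℝ → X is a geodesic line with ℓ ⊂ N_R(C) for some R > 0, then ℓ ⊂ closure of N_σ(C), and ℓ is parallel to a geodesic line contained in C. -/
open Set Metric Filter Topology

section Helpers
variable {X : Type*} [MetricSpace X] [CAT0 X]

/-- `m` is a midpoint of `a` and `b`. -/
def Midpt (a b m : X) : Prop := dist a m = dist a b / 2 ∧ dist m b = dist a b / 2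

lemma Midpt.symm {a b m : X} (h : Midpt a b m) : Midpt b a m := by
  obtain ⟨h1, h2⟩ := h
  refine ⟨?_, ?_⟩
  · rw [dist_comm b m, dist_comm b a]; exact h2
  · rw [dist_comm m a, dist_comm b a]; exact h1

lemma midpt_exists (a b : X) : ∃ m : X, Midpt a b m := by
  obtain ⟨γ, hg, h0, h1⟩ := CAT0.geodesic a b
  have hd : (0:ℝ) ≤ dist a b := dist_nonneg
  refine ⟨γ (dist a b / 2), ?_, ?_⟩
  · have := hg 0 ⟨le_refl _, hd⟩ (dist a b / 2) ⟨by linarith, by linarith⟩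
    rw [h0] at this; rw [this]; rw [abs_of_nonpos (by linarith)]; ring
  · have := hg (dist a b / 2) ⟨by linarith, by linarith⟩ (dist a b) ⟨hd, le_refl _⟩
    rw [h1] at this; rw [this]; rw [abs_of_nonpos (by linarith)]; ring

lemma midpt_contract {a b c m1 m2 : X} (h1 : Midpt a c m1) (h2 : Midpt b c m2) :
    dist m1 m2 ≤ dist a b / 2 := by
  have e1 := CAT0.cn a b c m2 h2.1 h2.2
  have e2 := CAT0.cn m2 a c m1 h1.1 h1.2
  have hac : dist m2 a = dist a m2 := dist_comm _ _
  have hm2c : dist m2 c = dist b c / 2 := h2.2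
  have hd : (0:ℝ) ≤ dist m1 m2 := dist_nonneg
  have hab : (0:ℝ) ≤ dist a b := dist_nonneg
  have key : dist m2 m1 ^ 2 ≤ (dist a b / 2) ^ 2 := by
    rw [hac, hm2c] at e2; nlinarith [e1, e2]
  rw [dist_comm m1 m2]
  nlinarith [key, dist_nonneg (x := m2) (y := m1)]

lemma midpt_contract₂ {a b a' b' m1 m2 : X} (h1 : Midpt a b m1) (h2 : Midpt a' b' m2) :
    dist m1 m2 ≤ dist a a' / 2 + dist b b' / 2 := by
  obtain ⟨m3, hm3⟩ := midpt_exists a' b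
  have d13 : dist m1 m3 ≤ dist a a' / 2 := midpt_contract h1 hm3
  have d32 : dist m3 m2 ≤ dist b b' / 2 := midpt_contract hm3.symm h2.symm
  calc dist m1 m2 ≤ dist m1 m3 + dist m3 m2 := dist_triangle _ _ _
    _ ≤ _ := by linarith

end Helpers

section Aff
variable {X : Type*} [MetricSpace X] [CAT0 X]

/-- affinely parametrized geodesic on `[0,1]` with speed `A`. -/
def AffGeo (α : ℝ → X) (A : ℝ) : Prop :=
  ∀ s ∈ Set.Icc (0:ℝ) 1, ∀ t ∈ Set.Icc (0:ℝ) 1, dist (α s) (α t) = A * |s - t|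

lemma AffGeo.nonneg {α : ℝ → X} {A : ℝ} (h : AffGeo α A) : 0 ≤ A := by
  have e := h 0 ⟨le_refl _, zero_le_one⟩ 1 ⟨zero_le_one, le_refl _⟩
  have h2 : |(0:ℝ) - 1| = 1 := by norm_num
  rw [h2, mul_one] at e
  rw [← e]; exact dist_nonneg

lemma AffGeo.midpt {α : ℝ → X} {A : ℝ} (h : AffGeo α A) {s t : ℝ}
    (hs : s ∈ Set.Icc (0:ℝ) 1) (ht : t ∈ Set.Icc (0:ℝ) 1) :
    Midpt (α s) (α t) (α ((s + t) / 2)) := by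
  have hm : (s + t) / 2 ∈ Set.Icc (0:ℝ) 1 := by
    obtain ⟨a1,a2⟩ := hs; obtain ⟨b1,b2⟩ := ht; exact ⟨by linarith, by linarith⟩
  have e1 := h s hs ((s+t)/2) hm
  have e2 := h ((s+t)/2) hm t ht
  have e3 := h s hs t ht
  have habs1 : |s - (s + t)/2| = |s - t| / 2 := by
    rw [show s - (s+t)/2 = (s - t)/2 by ring, abs_div]; norm_num
  have habs2 : |(s + t)/2 - t| = |s - t| / 2 := by
    rw [show (s+t)/2 - t = (s - t)/2 by ring, abs_div]; norm_num
  constructor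
  · rw [e1, habs1, e3]; ring
  · rw [e2, habs2, e3]; ring

lemma aff_convex {α β : ℝ → X} {A B : ℝ} (hα : AffGeo α A) (hβ : AffGeo β B) :
    ∀ t ∈ Set.Icc (0:ℝ) 1,
      dist (α t) (β t) ≤ (1 - t) * dist (α 0) (β 0) + t * dist (α 1) (β 1) := by
  obtain ⟨g, hg⟩ : ∃ g : ℝ → ℝ, ∀ u, g u = dist (α u) (β u) := ⟨_, fun _ => rfl⟩
  obtain ⟨lin, hlin⟩ : ∃ lin : ℝ → ℝ, ∀ u, lin u = (1 - u) * g 0 + u * g 1 :=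
    ⟨_, fun _ => rfl⟩
  suffices h : ∀ t ∈ Set.Icc (0:ℝ) 1, g t ≤ lin t by
    intro t ht
    have := h t ht
    rw [hg, hlin, hg, hg] at this
    exact this
  have step : ∀ s ∈ Set.Icc (0:ℝ) 1, ∀ t ∈ Set.Icc (0:ℝ) 1,
      g ((s + t)/2) ≤ (g s + g t) / 2 := by
    intro s hs t ht
    have h2 := midpt_contract₂ (hα.midpt hs ht) (hβ.midpt hs ht)
    rw [hg, hg, hg]
    linarith [h2]
  have dyad : ∀ k : ℕ, ∀ j : ℕ, j ≤ 2^k →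
      ((j:ℝ)/2^k) ∈ Set.Icc (0:ℝ) 1 ∧ g ((j:ℝ)/2^k) ≤ lin ((j:ℝ)/2^k) := by
    intro k
    induction k with
    | zero =>
      intro j hj
      interval_cases j
      · refine ⟨by norm_num, ?_⟩
        rw [hlin]; norm_num
      · refine ⟨by norm_num, ?_⟩
        rw [hlin]; norm_num
    | succ k ih =>
      intro j hj
      rcases Nat.even_or_odd j with ⟨i, hi⟩ | ⟨i, hi⟩
      · have hi2 : i ≤ 2^k := by omega
        have := ih i hi2
        have heq : ((j:ℝ)/2^(k+1)) = (i:ℝ)/2^k := by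
          subst hi; push_cast; ring
        rw [heq]; exact this
      · have hi2 : i ≤ 2^k - 1 := by omega
        have h1 := ih i (by omega)
        have h2 := ih (i+1) (by omega)
        have heq : ((j:ℝ)/2^(k+1)) = (((i:ℝ)/2^k) + ((i+1:ℕ):ℝ)/2^k) / 2 := by
          subst hi; push_cast; field_simp; ring
        constructor
        · rw [heq]
          obtain ⟨⟨a1,a2⟩,-⟩ := h1; obtain ⟨⟨b1,b2⟩,-⟩ := h2
          exact ⟨by linarith, by linarith⟩
        · rw [heq]
          have hs := step _ h1.1 _ h2.1
          have : lin ((((i:ℝ)/2^k) + ((i+1:ℕ):ℝ)/2^k) / 2)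
              = (lin ((i:ℝ)/2^k) + lin (((i+1:ℕ):ℝ)/2^k)) / 2 := by
            rw [hlin, hlin, hlin]; ring
          rw [this]
          linarith [h1.2, h2.2]
  -- now the limit step
  intro t ht
  have hA := hα.nonneg
  have hB := hβ.nonneg
  have hKnn : (0:ℝ) ≤ A + B + |g 0 - g 1| := by positivity
  have key : ∀ k : ℕ, g t ≤ lin t + (A + B + |g 0 - g 1|) * (1/2)^k := by
    intro k
    have h2k : (0:ℝ) < 2^k := by positivity
    set j := ⌊t * 2^k⌋₊ with hjdef
    have hjle : (j:ℝ) ≤ t * 2^k := Nat.floor_le (by nlinarith [ht.1])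
    have hjgt : t * 2^k < (j:ℝ) + 1 := Nat.lt_floor_add_one _
    have hjmax : j ≤ 2^k := by
      have h1 : t * 2^k ≤ ((2^k : ℕ):ℝ) := by push_cast; nlinarith [ht.2]
      have := Nat.floor_le_floor h1
      rwa [Nat.floor_natCast] at this
    have hdy := dyad k j hjmax
    set lam := (j:ℝ)/2^k with hlam
    have hc1 : lam ≤ t := by rw [hlam, div_le_iff₀ h2k]; linarith
    have hc2 : t - lam ≤ (1/2)^k := by
      rw [hlam]
      have : (1/2:ℝ)^k = 1/2^k := by rw [div_pow]; norm_num
      rw [this, sub_le_iff_le_add, ← add_div, le_div_iff₀ h2k]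
      linarith
    have b1 : g t ≤ g lam + (A + B) * (t - lam) := by
      have tri : dist (α t) (β t) ≤ dist (α t) (α lam) + dist (α lam) (β lam)
          + dist (β lam) (β t) := dist_triangle4 _ _ _ _
      have e1 : dist (α t) (α lam) = A * (t - lam) := by
        rw [hα t ht lam hdy.1, abs_of_nonneg (by linarith)]
      have e2 : dist (β lam) (β t) = B * (t - lam) := by
        rw [hβ lam hdy.1 t ht, abs_of_nonpos (by linarith)]; ring_nf
      rw [hg, hg]
      rw [e1, e2] at tri
      linarith
    have b2 : lin lam ≤ lin t + |g 0 - g 1| * (t - lam) := by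
      have : lin lam - lin t = (t - lam) * (g 0 - g 1) := by rw [hlin, hlin]; ring
      nlinarith [le_abs_self (g 0 - g 1), abs_nonneg (g 0 - g 1)]
    have hKt : (A + B + |g 0 - g 1|) * (t - lam) ≤ (A + B + |g 0 - g 1|) * (1/2)^k :=
      mul_le_mul_of_nonneg_left hc2 hKnn
    have hexp : (A + B + |g 0 - g 1|) * (t - lam)
        = (A + B) * (t - lam) + |g 0 - g 1| * (t - lam) := by ring
    linarith [hdy.2]
  have hlimit : Tendsto (fun k : ℕ => lin t + (A + B + |g 0 - g 1|) * (1/2)^k) atTop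
      (𝓝 (lin t + (A + B + |g 0 - g 1|) * 0)) :=
    tendsto_const_nhds.add
      ((tendsto_pow_atTop_nhds_zero_of_lt_one (r := 1/2) (by norm_num) (by norm_num)).const_mul _)
  have := ge_of_tendsto' hlimit key
  simpa using this

end Aff

section Bridge
variable {X : Type*} [MetricSpace X] [CAT0 X]

lemma affgeo_of_line {ℓ : ℝ → X} (hℓ : IsGeodLine ℓ) (a b : ℝ) :
    AffGeo (fun lam => ℓ (a + lam * (b - a))) |b - a| := by
  intro s _ t _
  rw [hℓ]
  rw [show a + s * (b - a) - (a + t * (b - a)) = (b - a) * (s - t) by ring, abs_mul]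

lemma affgeo_of_geod {γ : ℝ → X} {x y : X} (h : GeodFromTo γ x y) :
    AffGeo (fun lam => γ (lam * dist x y)) (dist x y) := by
  intro s hs t ht
  have hd : (0:ℝ) ≤ dist x y := dist_nonneg
  have hmem : ∀ u : ℝ, u ∈ Set.Icc (0:ℝ) 1 → u * dist x y ∈ Set.Icc 0 (dist x y) := by
    intro u hu
    exact ⟨mul_nonneg hu.1 hd, by nlinarith [hu.2]⟩
  rw [h.1 _ (hmem s hs) _ (hmem t ht),
    show s * dist x y - t * dist x y = dist x y * (s - t) by ring, abs_mul,
    abs_of_nonneg hd]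

/-- The main comparison: convexity of distance between a geodesic line (affinely
reparametrized from `ℓ a` to `ℓ b`) and a geodesic from `x` to `y`. -/
lemma cat0_conv {ℓ γ : ℝ → X} (hℓ : IsGeodLine ℓ) {x y : X} (hγ : GeodFromTo γ x y)
    (a b : ℝ) {lam : ℝ} (hlam : lam ∈ Set.Icc (0:ℝ) 1) :
    dist (ℓ (a + lam * (b - a))) (γ (lam * dist x y)) ≤
      (1 - lam) * dist (ℓ a) x + lam * dist (ℓ b) y := by
  have h := aff_convex (affgeo_of_line hℓ a b) (affgeo_of_geod hγ) lam hlam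
  simpa [hγ.2.1, hγ.2.2] using h

end Bridge

set_option maxHeartbeats 2000000 in
/-- Lemma 3.4: if `C` is a closed convex Morse subset with projection constant `σ`
(as in Theorem 3.1(3)) of a proper CAT(0) space, and `ℓ` is a geodesic line contained
in the `R`-neighborhood of `C`, then `ℓ` lies in the closed `σ`-neighborhood of `C`
and `ℓ` is parallel to a geodesic line contained in `C`. -/
theorem line_near_Morse_subset
    {X : Type*} [MetricSpace X] [ProperSpace X] [CAT0 X]
    (C : Set X) (hclosed : IsClosed C) (hconv : GeodConvex C) (hCne : C.Nonempty)
    (p : X → X) (hp : IsClosestPointProj C p)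
    (σ : ℝ) (hσ : 0 ≤ σ)
    (hproj : ∀ x : X, ∀ y ∈ C, ∀ γ : ℝ → X, GeodFromTo γ x y →
      Metric.infDist (p x) (geodSeg γ x y) ≤ σ)
    (ℓ : ℝ → X) (hℓ : IsGeodLine ℓ)
    (R : ℝ) (hR : 0 < R) (hin : ∀ t : ℝ, Metric.infDist (ℓ t) C < R) :
    (∀ t : ℝ, Metric.infDist (ℓ t) C ≤ σ) ∧
    ∃ ℓ' : ℝ → X, IsGeodLine ℓ' ∧ (∀ t : ℝ, ℓ' t ∈ C) ∧
      ∃ M : ℝ, ∀ t : ℝ, dist (ℓ t) (ℓ' t) ≤ M := by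
  classical
  have hdistp : ∀ x : X, dist x (p x) = infDist x C := by
    intro x
    refine le_antisymm ?_ (infDist_le_dist_of_mem (hp x).1)
    by_contra h
    push_neg at h
    obtain ⟨z, hz, hlt⟩ := (infDist_lt_iff hCne).1 h
    exact absurd ((hp x).2 z hz) (by linarith)
  -- midpoint convexity of distance to C along the line
  have mc : ∀ s t : ℝ,
      infDist (ℓ ((s+t)/2)) C ≤ (infDist (ℓ s) C + infDist (ℓ t) C) / 2 := by
    intro s t
    obtain ⟨γ, hγ⟩ := CAT0.geodesic (p (ℓ s)) (p (ℓ t))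
    have hd : (0:ℝ) ≤ dist (p (ℓ s)) (p (ℓ t)) := dist_nonneg
    have hmemC : γ ((1/2 : ℝ) * dist (p (ℓ s)) (p (ℓ t))) ∈ C := by
      refine hconv γ 0 (dist (p (ℓ s)) (p (ℓ t))) hd hγ.1 ?_ ?_ _ ⟨by linarith, by linarith⟩
      · rw [hγ.2.1]; exact (hp _).1
      · rw [hγ.2.2]; exact (hp _).1
    have hcomp := cat0_conv hℓ hγ s t (lam := 1/2) ⟨by norm_num, by norm_num⟩
    have harg : s + (1/2:ℝ) * (t - s) = (s+t)/2 := by ring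
    rw [harg, hdistp, hdistp] at hcomp
    calc infDist (ℓ ((s+t)/2)) C ≤ dist (ℓ ((s+t)/2)) (γ ((1/2:ℝ) * dist (p (ℓ s)) (p (ℓ t)))) :=
          infDist_le_dist_of_mem hmemC
      _ ≤ _ := by linarith [hcomp]
  -- the distance to C is constant along ℓ
  have hconst : ∀ t : ℝ, infDist (ℓ t) C = infDist (ℓ 0) C := by
    have mono : ∀ s d : ℝ, infDist (ℓ (s + d)) C ≤ infDist (ℓ s) C := by
      intro s d
      by_contra hlt
      push_neg at hlt
      have hδ : 0 < infDist (ℓ (s+d)) C - infDist (ℓ s) C := by linarith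
      set δ := infDist (ℓ (s+d)) C - infDist (ℓ s) C with hδdef
      have grow : ∀ k : ℕ,
          infDist (ℓ (s + (k:ℝ)*d)) C + δ ≤ infDist (ℓ (s + ((k:ℝ)+1)*d)) C := by
        intro k
        induction k with
        | zero => simp only [Nat.cast_zero, zero_mul, add_zero, zero_add, one_mul]
                  rw [hδdef]; linarith
        | succ n ih =>
          have hmc := mc (s + (n:ℝ)*d) (s + ((n:ℝ)+2)*d)
          have harg : ((s + (n:ℝ)*d) + (s + ((n:ℝ)+2)*d))/2 = s + ((n:ℝ)+1)*d := by ring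
          rw [harg] at hmc
          push_cast
          push_cast at ih
          have e1 : s + ((n:ℝ)+1+1)*d = s + ((n:ℝ)+2)*d := by ring
          rw [e1]
          linarith
      have tot : ∀ k : ℕ, infDist (ℓ s) C + (k:ℝ)*δ ≤ infDist (ℓ (s + (k:ℝ)*d)) C := by
        intro k
        induction k with
        | zero => simp
        | succ n ih =>
          have := grow n
          push_cast
          push_cast at ih this
          nlinarith
      obtain ⟨k, hk⟩ := exists_nat_gt ((R - infDist (ℓ s) C)/δ)
      have h1 := tot k
      have h2 := hin (s + (k:ℝ)*d)
      rw [div_lt_iff₀ hδ] at hk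
      linarith
    intro t
    refine le_antisymm ?_ ?_
    · have := mono 0 t; simpa using this
    · have := mono t (-t); simpa using this
  have hc0 : 0 ≤ infDist (ℓ 0) C := infDist_nonneg
  have hcd : ∀ t : ℝ, dist (ℓ t) (p (ℓ t)) = infDist (ℓ 0) C := by
    intro t; rw [hdistp, hconst]
  -- Step B : c ≤ σ
  have hcσ : infDist (ℓ 0) C ≤ σ := by
    obtain ⟨c, hcdef⟩ : ∃ c : ℝ, c = infDist (ℓ 0) C := ⟨_, rfl⟩
    rw [← hcdef]
    have hconstc : ∀ t : ℝ, infDist (ℓ t) C = c := by intro t; rw [hconst, hcdef]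
    have hcdc : ∀ t : ℝ, dist (ℓ t) (p (ℓ t)) = c := by intro t; rw [hcd, hcdef]
    have hc0c : 0 ≤ c := by rw [hcdef]; exact hc0
    refine le_of_forall_pos_le_add ?_
    intro ε hε
    obtain ⟨ε', hε'def⟩ : ∃ x : ℝ, x = ε/2 := ⟨_, rfl⟩
    have hε' : 0 < ε' := by rw [hε'def]; linarith
    obtain ⟨T, hT⟩ : ∃ T : ℝ, T = (c + c*(c+σ+ε')/ε')/2 + 1 := ⟨_, rfl⟩
    have hnum : 0 ≤ c*(c+σ+ε')/ε' := by positivity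
    have hTpos : 2*T - c = c*(c+σ+ε')/ε' + 2 := by rw [hT]; ring
    have hTnn : (0:ℝ) ≤ T := by rw [hT]; linarith
    obtain ⟨γ, hγ⟩ := CAT0.geodesic (ℓ T) (p (ℓ (-T)))
    obtain ⟨L, hLdef⟩ : ∃ L : ℝ, L = dist (ℓ T) (p (ℓ (-T))) := ⟨_, rfl⟩
    have h2T : dist (ℓ T) (ℓ (-T)) = 2*T := by
      rw [hℓ, show T - (-T) = 2*T by ring, abs_of_nonneg (by linarith)]
    have hpc : dist (p (ℓ (-T))) (ℓ (-T)) = c := by rw [dist_comm]; exact hcdc _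
    have hLlb : 2*T - c ≤ L := by
      have tri := dist_triangle (ℓ T) (p (ℓ (-T))) (ℓ (-T))
      rw [h2T, hpc, ← hLdef] at tri
      linarith
    have hLpos : 0 < L := by linarith
    have hseg := hproj (ℓ T) (p (ℓ (-T))) (hp _).1 γ hγ
    have hne : (geodSeg γ (ℓ T) (p (ℓ (-T)))).Nonempty :=
      ⟨ℓ T, 0, ⟨le_refl _, dist_nonneg⟩, hγ.2.1⟩
    obtain ⟨w, hwmem, hwlt⟩ := (infDist_lt_iff hne).1
      (lt_of_le_of_lt hseg (by linarith : σ < σ + ε'))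
    obtain ⟨u, humem, hwu⟩ := hwmem
    rw [← hLdef] at humem
    have hu : dist (ℓ T) (γ u) = u := by
      have h0 : (0:ℝ) ∈ Set.Icc 0 (dist (ℓ T) (p (ℓ (-T)))) := ⟨le_refl _, dist_nonneg⟩
      have := hγ.1 0 h0 u (by rw [← hLdef] at *; exact humem)
      rw [hγ.2.1] at this
      rw [this, abs_of_nonpos (by linarith [humem.1]), neg_sub, sub_zero]
    have hlam : u/L ∈ Set.Icc (0:ℝ) 1 :=
      ⟨div_nonneg humem.1 hLpos.le, (div_le_one hLpos).2 humem.2⟩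
    have hcomp := cat0_conv hℓ hγ T (-T) hlam
    rw [← hLdef, div_mul_cancel₀ _ (ne_of_gt hLpos)] at hcomp
    rw [dist_self, mul_zero, hcdc (-T)] at hcomp
    have hchain : c ≤ u/L*c + dist (γ u) (p (ℓ T)) := by
      have h1 : infDist (ℓ (T + u/L * (-T - T))) C = c := hconstc _
      have h2 : infDist (ℓ (T + u/L * (-T - T))) C ≤ dist (ℓ (T + u/L * (-T - T))) (p (ℓ T)) :=
        infDist_le_dist_of_mem (hp _).1
      have tri := dist_triangle (ℓ (T + u/L * (-T - T))) (γ u) (p (ℓ T))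
      linarith
    have hwu' : dist (γ u) (p (ℓ T)) < σ + ε' := by
      rw [← hwu] at hwlt
      rw [dist_comm]
      exact hwlt
    have hub : u ≤ c + σ + ε' := by
      have tri := dist_triangle (ℓ T) (p (ℓ T)) (γ u)
      rw [hu, hcdc T] at tri
      have : dist (p (ℓ T)) (γ u) < σ + ε' := by rw [dist_comm]; exact hwu'
      linarith
    have hfrac : u/L*c ≤ ε' := by
      rw [div_mul_eq_mul_div, div_le_iff₀ hLpos]
      have hdivc : ε' * (c*(c+σ+ε')/ε') = c*(c+σ+ε') := by
        field_simp
      nlinarith [hLlb, hc0c, hσ, hε'.le, mul_le_mul_of_nonneg_right hub hc0c,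
        mul_le_mul_of_nonneg_left hLlb hε'.le]
    have hfin : c ≤ ε' + (σ + ε') := by linarith
    rw [hε'def] at hfin
    linarith
  refine ⟨fun t => by rw [hconst]; exact hcσ, ?_⟩
  -- construction of the parallel line in C
  obtain ⟨c, hcdef⟩ : ∃ c : ℝ, c = infDist (ℓ 0) C := ⟨_, rfl⟩
  have hconstc : ∀ t : ℝ, infDist (ℓ t) C = c := by intro t; rw [hconst, hcdef]
  have hcdc : ∀ t : ℝ, dist (ℓ t) (p (ℓ t)) = c := by intro t; rw [hcd, hcdef]
  have hc0c : 0 ≤ c := by rw [hcdef]; exact hc0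
  choose Γ hΓ using fun n : ℕ => CAT0.geodesic (p (ℓ (-((n:ℝ)+1)))) (p (ℓ ((n:ℝ)+1)))
  obtain ⟨L, hL⟩ : ∃ L : ℕ → ℝ, ∀ n, L n = dist (p (ℓ (-((n:ℝ)+1)))) (p (ℓ ((n:ℝ)+1))) :=
    ⟨_, fun _ => rfl⟩
  obtain ⟨h, hh⟩ : ∃ h : ℕ → ℝ → X,
      ∀ n t, h n t = Γ n ((t + ((n:ℝ)+1)) / (2*((n:ℝ)+1)) * L n) := ⟨_, fun _ _ => rfl⟩
  have hN : ∀ n : ℕ, (0:ℝ) < (n:ℝ)+1 := fun n => by positivity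
  have hparam : ∀ n : ℕ, ∀ t : ℝ, |t| ≤ (n:ℝ)+1 →
      (t + ((n:ℝ)+1)) / (2*((n:ℝ)+1)) ∈ Set.Icc (0:ℝ) 1 := by
    intro n t ht
    rw [abs_le] at ht
    constructor
    · apply div_nonneg (by linarith [ht.1]) (by linarith [hN n])
    · rw [div_le_one (by linarith [hN n])]
      linarith [ht.2]
  have hLnn : ∀ n, 0 ≤ L n := by intro n; rw [hL]; exact dist_nonneg
  have h2N : ∀ n : ℕ, dist (ℓ (-((n:ℝ)+1))) (ℓ ((n:ℝ)+1)) = 2*((n:ℝ)+1) := by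
    intro n
    rw [hℓ, show -((n:ℝ)+1) - ((n:ℝ)+1) = -(2*((n:ℝ)+1)) by ring, abs_neg,
      abs_of_nonneg (by linarith [hN n])]
  have hLbound : ∀ n : ℕ, |L n - 2*((n:ℝ)+1)| ≤ 2*c := by
    intro n
    have t1 : dist (p (ℓ (-((n:ℝ)+1)))) (p (ℓ ((n:ℝ)+1))) ≤
        dist (p (ℓ (-((n:ℝ)+1)))) (ℓ (-((n:ℝ)+1))) + dist (ℓ (-((n:ℝ)+1))) (ℓ ((n:ℝ)+1))
        + dist (ℓ ((n:ℝ)+1)) (p (ℓ ((n:ℝ)+1))) := dist_triangle4 _ _ _ _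
    have t2 : dist (ℓ (-((n:ℝ)+1))) (ℓ ((n:ℝ)+1)) ≤
        dist (ℓ (-((n:ℝ)+1))) (p (ℓ (-((n:ℝ)+1)))) + dist (p (ℓ (-((n:ℝ)+1)))) (p (ℓ ((n:ℝ)+1)))
        + dist (p (ℓ ((n:ℝ)+1))) (ℓ ((n:ℝ)+1)) := dist_triangle4 _ _ _ _
    rw [h2N] at t1 t2
    rw [dist_comm (p (ℓ (-((n:ℝ)+1)))) (ℓ (-((n:ℝ)+1))), hcdc] at t1
    rw [hcdc] at t1 t2
    rw [dist_comm (p (ℓ ((n:ℝ)+1))) (ℓ ((n:ℝ)+1)), hcdc] at t2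
    rw [← hL] at t1 t2
    rw [abs_le]
    constructor <;> linarith
  have hmemC : ∀ n : ℕ, ∀ t : ℝ, |t| ≤ (n:ℝ)+1 → h n t ∈ C := by
    intro n t ht
    rw [hh]
    have hlam := hparam n t ht
    refine hconv (Γ n) 0 (dist (p (ℓ (-((n:ℝ)+1)))) (p (ℓ ((n:ℝ)+1)))) dist_nonneg
      (hΓ n).1 ?_ ?_ _ ⟨?_, ?_⟩
    · rw [(hΓ n).2.1]; exact (hp _).1
    · rw [(hΓ n).2.2]; exact (hp _).1
    · exact mul_nonneg hlam.1 (hLnn n)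
    · rw [← hL]
      nlinarith [hlam.2, hLnn n]
  have hclose : ∀ n : ℕ, ∀ t : ℝ, |t| ≤ (n:ℝ)+1 → dist (ℓ t) (h n t) ≤ c := by
    intro n t ht
    have hlam := hparam n t ht
    have hcomp := cat0_conv hℓ (hΓ n) (-((n:ℝ)+1)) ((n:ℝ)+1) hlam
    have harg : -((n:ℝ)+1) + (t + ((n:ℝ)+1)) / (2*((n:ℝ)+1)) * (((n:ℝ)+1) - -((n:ℝ)+1)) = t := by
      field_simp
      ring
    rw [harg, hcdc, hcdc, ← hL, ← hh] at hcomp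
    calc dist (ℓ t) (h n t) ≤
        (1 - (t + ((n:ℝ)+1)) / (2*((n:ℝ)+1))) * c + (t + ((n:ℝ)+1)) / (2*((n:ℝ)+1)) * c := hcomp
      _ = c := by ring
  have hdij : ∀ n : ℕ, ∀ s t : ℝ, |s| ≤ (n:ℝ)+1 → |t| ≤ (n:ℝ)+1 →
      dist (h n s) (h n t) = L n / (2*((n:ℝ)+1)) * |s - t| := by
    intro n s t hs ht
    have hls := hparam n s hs
    have hlt := hparam n t ht
    have hmem : ∀ r : ℝ, r ∈ Set.Icc (0:ℝ) 1 →
        r * L n ∈ Set.Icc 0 (dist (p (ℓ (-((n:ℝ)+1)))) (p (ℓ ((n:ℝ)+1)))) := by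
      intro r hr
      rw [← hL]
      exact ⟨mul_nonneg hr.1 (hLnn n), by nlinarith [hr.2, hLnn n]⟩
    rw [hh, hh]
    rw [(hΓ n).1 _ (hmem _ hls) _ (hmem _ hlt)]
    rw [show (s + ((n:ℝ)+1)) / (2*((n:ℝ)+1)) * L n - (t + ((n:ℝ)+1)) / (2*((n:ℝ)+1)) * L n
      = L n / (2*((n:ℝ)+1)) * (s - t) by ring, abs_mul,
      abs_of_nonneg (div_nonneg (hLnn n) (by linarith [hN n]))]
  -- pass to a subsequential limit over rational times
  obtain ⟨u, hudef⟩ : ∃ u : ℕ → ℚ → X,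
      ∀ n q, u n q = if |(q:ℝ)| ≤ (n:ℝ)+1 then h n (q:ℝ) else p (ℓ (q:ℝ)) :=
    ⟨_, fun _ _ => rfl⟩
  have humem : ∀ n, u n ∈ Set.pi Set.univ (fun q : ℚ => closedBall (ℓ (q:ℝ)) c) := by
    intro n q _
    rw [hudef]
    by_cases hq : |(q:ℝ)| ≤ (n:ℝ)+1
    · rw [if_pos hq]
      exact mem_closedBall.2 (by rw [dist_comm]; exact hclose n _ hq)
    · rw [if_neg hq]
      exact mem_closedBall.2 (by rw [dist_comm]; exact (hcdc _).le)
  have huC : ∀ n q, u n q ∈ C := by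
    intro n q
    rw [hudef]
    by_cases hq : |(q:ℝ)| ≤ (n:ℝ)+1
    · rw [if_pos hq]; exact hmemC n _ hq
    · rw [if_neg hq]; exact (hp _).1
  obtain ⟨G, hGmem, φ, hφ, hφt⟩ :=
    (isCompact_univ_pi (fun q : ℚ => isCompact_closedBall (ℓ (q:ℝ)) c)).tendsto_subseq humem
  have hpt : ∀ q : ℚ, Tendsto (fun k => u (φ k) q) atTop (𝓝 (G q)) :=
    fun q => (tendsto_pi_nhds.1 hφt) q
  have hGC : ∀ q : ℚ, G q ∈ C :=
    fun q => hclosed.mem_of_tendsto (hpt q) (Eventually.of_forall fun k => huC _ _)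
  have hGball : ∀ q : ℚ, dist (ℓ (q:ℝ)) (G q) ≤ c := by
    intro q
    have := hGmem q (Set.mem_univ q)
    rw [mem_closedBall] at this
    rw [dist_comm]
    exact this
  have hGd : ∀ q r : ℚ, dist (G q) (G r) = |(q:ℝ) - (r:ℝ)| := by
    intro q r
    refine tendsto_nhds_unique ((hpt q).dist (hpt r)) ?_
    rw [Metric.tendsto_atTop]
    intro ε hε
    obtain ⟨K1, hK1⟩ := exists_nat_gt (max |(q:ℝ)| |(r:ℝ)|)
    obtain ⟨K2, hK2⟩ := exists_nat_gt (c * |(q:ℝ) - (r:ℝ)| / ε)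
    refine ⟨max K1 K2, fun k hk => ?_⟩
    have hk1 : K1 ≤ k := le_trans (le_max_left _ _) hk
    have hk2 : K2 ≤ k := le_trans (le_max_right _ _) hk
    have hφk : (k:ℝ) ≤ ((φ k : ℕ):ℝ) := Nat.cast_le.2 hφ.le_apply
    have hkK1 : (K1:ℝ) ≤ (k:ℝ) := Nat.cast_le.2 hk1
    have hq : |(q:ℝ)| ≤ ((φ k:ℕ):ℝ)+1 := by
      have := le_max_left |(q:ℝ)| |(r:ℝ)|
      linarith [hK1]
    have hr : |(r:ℝ)| ≤ ((φ k:ℕ):ℝ)+1 := by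
      have := le_max_right |(q:ℝ)| |(r:ℝ)|
      linarith [hK1]
    have hrw : dist (u (φ k) q) (u (φ k) r) = L (φ k) / (2*(((φ k:ℕ):ℝ)+1)) * |(q:ℝ) - (r:ℝ)| := by
      rw [hudef, hudef, if_pos hq, if_pos hr]
      exact hdij (φ k) _ _ hq hr
    have hNk : (0:ℝ) < ((φ k:ℕ):ℝ)+1 := hN _
    rw [Real.dist_eq, hrw]
    have hfact : L (φ k) / (2*(((φ k:ℕ):ℝ)+1)) * |(q:ℝ) - (r:ℝ)| - |(q:ℝ) - (r:ℝ)|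
        = (L (φ k) - 2*(((φ k:ℕ):ℝ)+1)) * |(q:ℝ) - (r:ℝ)| / (2*(((φ k:ℕ):ℝ)+1)) := by
      field_simp
    rw [hfact, abs_div, abs_mul, abs_of_pos (by linarith : (0:ℝ) < 2*(((φ k:ℕ):ℝ)+1)),
      abs_abs]
    have hNge : ((k:ℝ)+1) ≤ ((φ k:ℕ):ℝ)+1 := by linarith
    have habs : (0:ℝ) ≤ |(q:ℝ) - (r:ℝ)| := abs_nonneg _
    have hA : |L (φ k) - 2*(((φ k:ℕ):ℝ)+1)| * |(q:ℝ) - (r:ℝ)| / (2*(((φ k:ℕ):ℝ)+1))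
        ≤ 2*c * |(q:ℝ) - (r:ℝ)| / (2*(((φ k:ℕ):ℝ)+1)) := by
      gcongr
      exact hLbound _
    have hB : 2*c * |(q:ℝ) - (r:ℝ)| / (2*(((φ k:ℕ):ℝ)+1)) = c * |(q:ℝ) - (r:ℝ)| / (((φ k:ℕ):ℝ)+1) := by
      field_simp
    have hC : c * |(q:ℝ) - (r:ℝ)| / (((φ k:ℕ):ℝ)+1) ≤ c * |(q:ℝ) - (r:ℝ)| / ((k:ℝ)+1) := by
      apply div_le_div_of_nonneg_left (mul_nonneg hc0c habs) (by positivity) hNge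
    have hD : c * |(q:ℝ) - (r:ℝ)| / ((k:ℝ)+1) < ε := by
      rw [div_lt_iff₀ (by positivity)]
      rw [div_lt_iff₀ hε] at hK2
      have hcast : (K2:ℝ) ≤ (k:ℝ) := Nat.cast_le.2 hk2
      nlinarith [hε]
    linarith
  -- dyadic approximations of a real number
  obtain ⟨e, hedef⟩ : ∃ e : ℕ → ℝ → ℚ,
      ∀ k t, e k t = ((⌊t * 2^k⌋ : ℤ) : ℚ) / (2^k : ℚ) := ⟨_, fun _ _ => rfl⟩
  have he : ∀ k : ℕ, ∀ t : ℝ, |((e k t : ℚ) : ℝ) - t| ≤ (1/2)^k := by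
    intro k t
    have h2k : (0:ℝ) < 2^k := by positivity
    have hf1 : ((⌊t * 2^k⌋ : ℤ):ℝ) ≤ t * 2^k := Int.floor_le _
    have hf2 : t * 2^k < ((⌊t * 2^k⌋ : ℤ):ℝ) + 1 := Int.lt_floor_add_one _
    have hcast : ((e k t : ℚ) : ℝ) = ((⌊t * 2^k⌋ : ℤ):ℝ) / 2^k := by
      rw [hedef]; push_cast; ring
    have hhalf : (1/2:ℝ)^k = 1/2^k := by rw [div_pow, one_pow]
    rw [hcast, hhalf, abs_le]
    constructor
    · rw [neg_le, neg_sub, sub_le_iff_le_add, ← add_div, le_div_iff₀ h2k]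
      linarith
    · rw [sub_le_iff_le_add, div_le_iff₀ h2k]
      have hexp : (1/2^k + t) * 2^k = 1 + t * 2^k := by field_simp
      linarith
  have hetend : ∀ t : ℝ, Tendsto (fun k => ((e k t : ℚ) : ℝ)) atTop (𝓝 t) := by
    intro t
    rw [tendsto_iff_dist_tendsto_zero]
    refine squeeze_zero (fun k => dist_nonneg) (fun k => ?_)
      (tendsto_pow_atTop_nhds_zero_of_lt_one (r := 1/2) (by norm_num) (by norm_num))
    rw [Real.dist_eq]
    exact he k t
  have hcauchy : ∀ t : ℝ, CauchySeq (fun k => G (e k t)) := by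
    intro t
    rw [Metric.cauchySeq_iff']
    intro ε hε
    obtain ⟨K, hK⟩ := exists_pow_lt_of_lt_one (half_pos hε) (by norm_num : (1/2:ℝ) < 1)
    refine ⟨K, fun k hk => ?_⟩
    rw [hGd]
    have h1 := he k t
    have h2 := he K t
    have hmono : (1/2:ℝ)^k ≤ (1/2)^K := pow_le_pow_of_le_one (by norm_num) (by norm_num) hk
    have tri : |((e k t : ℚ):ℝ) - ((e K t : ℚ):ℝ)|
        ≤ |((e k t : ℚ):ℝ) - t| + |t - ((e K t : ℚ):ℝ)| := abs_sub_le _ _ _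
    rw [abs_sub_comm t ((e K t : ℚ):ℝ)] at tri
    linarith
  choose ℓ' hℓ'tend using fun t : ℝ => cauchySeq_tendsto_of_complete (hcauchy t)
  refine ⟨ℓ', ?_, ?_, c, ?_⟩
  · -- ℓ' is a geodesic line
    intro s t
    refine tendsto_nhds_unique ((hℓ'tend s).dist (hℓ'tend t)) ?_
    have hconv2 : Tendsto (fun k => |((e k s : ℚ):ℝ) - ((e k t : ℚ):ℝ)|) atTop (𝓝 |s - t|) :=
      ((hetend s).sub (hetend t)).abs
    exact Tendsto.congr (fun k => (hGd _ _).symm) hconv2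
  · -- ℓ' lies in C
    intro t
    exact hclosed.mem_of_tendsto (hℓ'tend t) (Eventually.of_forall fun k => hGC _)
  · -- ℓ' is parallel to ℓ
    intro t
    have hb : ∀ k : ℕ, dist (ℓ t) (G (e k t)) ≤ (1/2)^k + c := by
      intro k
      have tri := dist_triangle (ℓ t) (ℓ ((e k t : ℚ):ℝ)) (G (e k t))
      have h1 : dist (ℓ t) (ℓ ((e k t : ℚ):ℝ)) ≤ (1/2)^k := by
        rw [hℓ, abs_sub_comm]
        exact he k t
      linarith [hGball (e k t)]
    have hlim2 : Tendsto (fun k : ℕ => (1/2:ℝ)^k + c) atTop (𝓝 (0 + c)) :=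
      (tendsto_pow_atTop_nhds_zero_of_lt_one (r := 1/2) (by norm_num) (by norm_num)).add tendsto_const_nhds
    have := le_of_tendsto_of_tendsto' (tendsto_const_nhds.dist (hℓ'tend t)) hlim2 hb
    simpa using this
end

section
/- Let X be a proper CAT(0) space, C a closed convex Morse subset with projection constant σ, and let C' be the convex hull of C together with all geodesic lines in X parallel to a geodesic line in C. Then C' is contained in the closed σ-neighborhood of C, and C' contains every geodesic line in X parallel to a geodesic line in C'. -/
open Set Metric

/-- `ℓ` is parallel to a geodesic line contained in `C`. -/
def ParallelToLineIn {X : Type*} [MetricSpace X] (C : Set X) (ℓ : ℝ → X) : Prop :=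
  ∃ ℓ₂ : ℝ → X, IsGeodLine ℓ₂ ∧ (∀ t : ℝ, ℓ₂ t ∈ C) ∧ ∃ M : ℝ, ∀ t : ℝ, dist (ℓ t) (ℓ₂ t) ≤ M

open scoped NNReal

section Aux

lemma real_le_of_forall_pos {a b : ℝ} (h : ∀ ε : ℝ, 0 < ε → a ≤ b + ε) : a ≤ b := by
  by_contra hc
  push_neg at hc
  have := h ((a - b) / 2) (by linarith)
  linarith

lemma projIcc_coe {a b : ℝ} (hab : a ≤ b) {x : ℝ} (hx : x ∈ Icc a b) :
    ((projIcc a b hab x : Icc a b) : ℝ) = x := by rw [projIcc_of_mem hab hx]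

variable {X : Type*} [MetricSpace X]

lemma midpoint_dense {a b : ℝ} {S : Set ℝ} (hS : IsClosed S) (ha : a ∈ S) (hb : b ∈ S)
    (hsub : S ⊆ Icc a b) (hmid : ∀ s ∈ S, ∀ t ∈ S, (s + t) / 2 ∈ S) :
    Icc a b ⊆ S := by
  intro u hu
  by_contra hus
  have hA : (S ∩ Iic u).Nonempty := ⟨a, ha, hu.1⟩
  have hAb : BddAbove (S ∩ Iic u) := ⟨u, fun x hx => hx.2⟩
  have hα : sSup (S ∩ Iic u) ∈ S ∩ Iic u := (hS.inter isClosed_Iic).csSup_mem hA hAb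
  have hB : (S ∩ Ici u).Nonempty := ⟨b, hb, hu.2⟩
  have hBb : BddBelow (S ∩ Ici u) := ⟨u, fun x hx => hx.2⟩
  have hβ : sInf (S ∩ Ici u) ∈ S ∩ Ici u := (hS.inter isClosed_Ici).csInf_mem hB hBb
  set α := sSup (S ∩ Iic u)
  set β := sInf (S ∩ Ici u)
  have hαu : α < u := lt_of_le_of_ne hα.2 (fun h => hus (by rw [← h]; exact hα.1))
  have huβ : u < β := lt_of_le_of_ne hβ.2 (fun h => hus (by rw [h]; exact hβ.1))
  have hm := hmid α hα.1 β hβ.1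
  rcases le_total ((α + β) / 2) u with h | h
  · have : (α + β) / 2 ≤ α := le_csSup hAb ⟨hm, h⟩
    linarith
  · have : β ≤ (α + β) / 2 := csInf_le hBb ⟨hm, h⟩
    linarith

lemma const_of_midconvex_bdd {h : ℝ → ℝ} {M : ℝ} (hb : ∀ t, h t ≤ M)
    (hmid : ∀ s t : ℝ, h ((s + t) / 2) ≤ (h s + h t) / 2) (s t : ℝ) : h s = h t := by
  suffices H : ∀ s t : ℝ, h t ≤ h s from le_antisymm (H t s) (H s t)
  intro s t
  by_contra hc
  push_neg at hc
  set δ := h t - h s with hδ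
  have hδ0 : 0 < δ := by simp only [hδ]; linarith
  have key : ∀ n : ℕ, h s + 2 ^ n * δ ≤ h (s + 2 ^ n * (t - s)) := by
    intro n
    induction n with
    | zero =>
      have e : s + 2 ^ (0 : ℕ) * (t - s) = t := by norm_num
      rw [e]
      simp only [pow_zero, one_mul, hδ]
      linarith
    | succ n ih =>
      have hmideq : (s + (s + 2 ^ (n + 1) * (t - s))) / 2 = s + 2 ^ n * (t - s) := by ring
      have h2 := hmid s (s + 2 ^ (n + 1) * (t - s))
      rw [hmideq] at h2
      have e : (2 : ℝ) ^ (n + 1) = 2 * 2 ^ n := by ring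
      rw [e] at h2 ⊢
      linarith
  obtain ⟨n, hn⟩ := pow_unbounded_of_one_lt ((M - h s) / δ) (one_lt_two : (1 : ℝ) < 2)
  have hk := key n
  have hb' := hb (s + 2 ^ n * (t - s))
  have hlt : (M - h s) / δ * δ < 2 ^ n * δ := mul_lt_mul_of_pos_right hn hδ0
  rw [div_mul_cancel₀ _ (ne_of_gt hδ0)] at hlt
  linarith

variable [CAT0 X]

lemma exists_midpoint_s12 (x y : X) :
    ∃ m : X, dist x m = dist x y / 2 ∧ dist m y = dist x y / 2 := by
  obtain ⟨γ, hg, h0, h1⟩ := CAT0.geodesic x y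
  have hd : (0 : ℝ) ≤ dist x y := dist_nonneg
  refine ⟨γ (dist x y / 2), ?_, ?_⟩
  · have h' := hg 0 ⟨le_refl _, hd⟩ (dist x y / 2) ⟨by linarith, by linarith⟩
    rw [h0] at h'
    rw [h', abs_of_nonpos (by linarith)]
    ring
  · have h' := hg (dist x y / 2) ⟨by linarith, by linarith⟩ (dist x y) ⟨hd, le_refl _⟩
    rw [h1] at h'
    rw [h', abs_of_nonpos (by linarith)]
    ring

lemma half_base {a u v m1 m2 : X}
    (h1 : dist a m1 = dist a u / 2) (h2 : dist m1 u = dist a u / 2)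
    (h3 : dist a m2 = dist a v / 2) (h4 : dist m2 v = dist a v / 2) :
    dist m1 m2 ≤ dist u v / 2 := by
  have A := CAT0.cn u a v m2 h3 h4
  have B := CAT0.cn m2 a u m1 h1 h2
  have e1 : dist m2 a = dist a v / 2 := by rw [dist_comm]; exact h3
  have e2 : dist m2 u = dist u m2 := dist_comm _ _
  have e3 : dist u a = dist a u := dist_comm _ _
  rw [e1, e2] at B
  rw [e3] at A
  have h5 : dist m1 m2 ^ 2 ≤ (dist u v / 2) ^ 2 := by
    rw [dist_comm m1 m2]
    nlinarith [A, B]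
  have n1 : (0 : ℝ) ≤ dist m1 m2 := dist_nonneg
  have n2 : (0 : ℝ) ≤ dist u v := dist_nonneg
  nlinarith [h5, n1, n2]

lemma quad_mid {x y x' y' m m' : X}
    (h1 : dist x m = dist x y / 2) (h2 : dist m y = dist x y / 2)
    (h3 : dist x' m' = dist x' y' / 2) (h4 : dist m' y' = dist x' y' / 2) :
    dist m m' ≤ (dist x x' + dist y y') / 2 := by
  obtain ⟨q, hq1, hq2⟩ := exists_midpoint_s12 x y'
  have A : dist m q ≤ dist y y' / 2 := half_base h1 h2 hq1 hq2
  have B : dist q m' ≤ dist x x' / 2 := by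
    have hq1' : dist y' q = dist y' x / 2 := by
      rw [dist_comm y' q, dist_comm y' x]; exact hq2
    have hq2' : dist q x = dist y' x / 2 := by
      rw [dist_comm q x, dist_comm y' x]; exact hq1
    have h3' : dist y' m' = dist y' x' / 2 := by
      rw [dist_comm y' m', dist_comm y' x']; exact h4
    have h4' : dist m' x' = dist y' x' / 2 := by
      rw [dist_comm m' x', dist_comm y' x']; exact h3
    exact half_base hq1' hq2' h3' h4'
  calc dist m m' ≤ dist m q + dist q m' := dist_triangle _ _ _
    _ ≤ _ := by linarith

lemma geod_mid {γ : ℝ → X} {a b : ℝ} (hγ : IsGeodesicOn γ a b) {s t : ℝ}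
    (hs : s ∈ Icc a b) (ht : t ∈ Icc a b) :
    dist (γ s) (γ ((s + t) / 2)) = dist (γ s) (γ t) / 2 ∧
    dist (γ ((s + t) / 2)) (γ t) = dist (γ s) (γ t) / 2 := by
  have hm : (s + t) / 2 ∈ Icc a b := ⟨by linarith [hs.1, ht.1], by linarith [hs.2, ht.2]⟩
  constructor
  · rw [hγ s hs _ hm, hγ s hs t ht, show s - (s + t) / 2 = (s - t) / 2 by ring, abs_div]
    simp [abs_of_nonneg]
  · rw [hγ _ hm t ht, hγ s hs t ht, show (s + t) / 2 - t = (s - t) / 2 by ring, abs_div]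
    simp [abs_of_nonneg]

lemma line_mid {ℓ : ℝ → X} (hℓ : IsGeodLine ℓ) (s t : ℝ) :
    dist (ℓ s) (ℓ ((s + t) / 2)) = dist (ℓ s) (ℓ t) / 2 ∧
    dist (ℓ ((s + t) / 2)) (ℓ t) = dist (ℓ s) (ℓ t) / 2 :=
  geod_mid (a := min s t) (b := max s t) (fun u _ v _ => hℓ u v)
    ⟨min_le_left _ _, le_max_left _ _⟩ ⟨min_le_right _ _, le_max_right _ _⟩

lemma infDist_midpoint {C : Set X} (hconv : GeodConvex C) (hCne : C.Nonempty)
    {x y m : X} (h1 : dist x m = dist x y / 2) (h2 : dist m y = dist x y / 2) :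
    infDist m C ≤ (infDist x C + infDist y C) / 2 := by
  apply real_le_of_forall_pos
  intro ε hε
  obtain ⟨cx, hcx, hdx⟩ := (infDist_lt_iff hCne).mp
    (show infDist x C < infDist x C + ε by linarith)
  obtain ⟨cy, hcy, hdy⟩ := (infDist_lt_iff hCne).mp
    (show infDist y C < infDist y C + ε by linarith)
  obtain ⟨β, hβ, hβ0, hβ1⟩ := CAT0.geodesic cx cy
  have hd : (0 : ℝ) ≤ dist cx cy := dist_nonneg
  have hmem : β (dist cx cy / 2) ∈ C :=
    hconv β 0 (dist cx cy) hd hβ (by rw [hβ0]; exact hcx) (by rw [hβ1]; exact hcy) _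
      ⟨by linarith, by linarith⟩
  have hq1 : dist cx (β (dist cx cy / 2)) = dist cx cy / 2 := by
    have h' := hβ 0 ⟨le_refl _, hd⟩ (dist cx cy / 2) ⟨by linarith, by linarith⟩
    rw [hβ0] at h'
    rw [h', abs_of_nonpos (by linarith)]
    ring
  have hq2 : dist (β (dist cx cy / 2)) cy = dist cx cy / 2 := by
    have h' := hβ (dist cx cy / 2) ⟨by linarith, by linarith⟩ (dist cx cy) ⟨hd, le_refl _⟩
    rw [hβ1] at h'
    rw [h', abs_of_nonpos (by linarith)]
    ring
  have hquad := quad_mid h1 h2 hq1 hq2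
  calc infDist m C ≤ dist m (β (dist cx cy / 2)) := infDist_le_dist_of_mem hmem
    _ ≤ (dist x cx + dist y cy) / 2 := hquad
    _ ≤ (infDist x C + infDist y C) / 2 + ε := by linarith

lemma lipschitz_pair {a b : ℝ} (hab : a ≤ b) (g1 g2 : ℝ → X)
    (hg1 : ∀ s ∈ Icc a b, ∀ t ∈ Icc a b, dist (g1 s) (g1 t) ≤ |s - t|)
    (hg2 : ∀ s ∈ Icc a b, ∀ t ∈ Icc a b, dist (g2 s) (g2 t) ≤ |s - t|) :
    Continuous (fun u => dist (g1 (projIcc a b hab u : ℝ)) (g2 (projIcc a b hab u : ℝ))) := by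
  apply LipschitzWith.continuous (K := 2)
  apply LipschitzWith.of_dist_le_mul
  intro u v
  have hπ : dist (projIcc a b hab u : ℝ) (projIcc a b hab v : ℝ) ≤ dist u v := by
    have := (LipschitzWith.projIcc hab).dist_le_mul u v
    rw [Subtype.dist_eq] at this
    simpa using this
  have habs : |(projIcc a b hab u : ℝ) - (projIcc a b hab v : ℝ)| ≤ dist u v := by
    rw [← Real.dist_eq]; exact hπ
  calc dist (dist (g1 (projIcc a b hab u : ℝ)) (g2 (projIcc a b hab u : ℝ)))
        (dist (g1 (projIcc a b hab v : ℝ)) (g2 (projIcc a b hab v : ℝ)))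
      ≤ dist (g1 (projIcc a b hab u : ℝ)) (g1 (projIcc a b hab v : ℝ)) +
        dist (g2 (projIcc a b hab u : ℝ)) (g2 (projIcc a b hab v : ℝ)) :=
        dist_dist_dist_le _ _ _ _
    _ ≤ |(projIcc a b hab u : ℝ) - (projIcc a b hab v : ℝ)| +
        |(projIcc a b hab u : ℝ) - (projIcc a b hab v : ℝ)| := by
        gcongr
        · exact hg1 _ (projIcc a b hab u).2 _ (projIcc a b hab v).2
        · exact hg2 _ (projIcc a b hab u).2 _ (projIcc a b hab v).2
    _ ≤ dist u v + dist u v := by linarith [habs]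
    _ = ((2 : ℝ≥0) : ℝ) * dist u v := by push_cast; ring

end Aux

/-- Proposition 3.5: if `C` is a closed convex Morse subset with projection constant `σ`
and `C'` is the convex hull of `C` together with all geodesic lines parallel to a
geodesic line in `C`, then `C'` lies in the closed `σ`-neighborhood of `C`, and `C'`
contains every geodesic line parallel to a geodesic line in `C'`. -/
theorem convex_hull_of_parallel_lines
    {X : Type*} [MetricSpace X] [ProperSpace X] [CAT0 X]
    (C : Set X) (hclosed : IsClosed C) (hconv : GeodConvex C) (hCne : C.Nonempty)
    (p : X → X) (hp : IsClosestPointProj C p)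
    (σ : ℝ) (hσ : 0 ≤ σ)
    (hproj : ∀ x : X, ∀ y ∈ C, ∀ γ : ℝ → X, GeodFromTo γ x y →
      Metric.infDist (p x) (geodSeg γ x y) ≤ σ)
    (C' : Set X)
    (hC' : C' = ⋂₀ {D : Set X | GeodConvex D ∧ C ⊆ D ∧
      ∀ ℓ : ℝ → X, IsGeodLine ℓ → ParallelToLineIn C ℓ → Set.range ℓ ⊆ D}) :
    C' ⊆ {x : X | Metric.infDist x C ≤ σ} ∧
    ∀ ℓ : ℝ → X, IsGeodLine ℓ → ParallelToLineIn C' ℓ → Set.range ℓ ⊆ C' := by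
  have hpdist : ∀ x : X, dist x (p x) = infDist x C := by
    intro x
    refine le_antisymm ?_ (infDist_le_dist_of_mem (hp x).1)
    by_contra hcon
    push_neg at hcon
    obtain ⟨z, hz, hdz⟩ := (infDist_lt_iff hCne).mp hcon
    exact absurd ((hp x).2 z hz) (not_le.mpr hdz)
  -- (a) geodesic convexity of the σ-neighborhood
  have hNconv : GeodConvex {x : X | infDist x C ≤ σ} := by
    intro γ a b hab hγ ha hb t ht
    have hcont : Continuous (fun u => infDist (γ (projIcc a b hab u : ℝ)) C) := by
      apply LipschitzWith.continuous (K := 1)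
      apply LipschitzWith.of_dist_le_mul
      intro u v
      have h1 := (lipschitz_infDist_pt C).dist_le_mul (γ (projIcc a b hab u : ℝ))
        (γ (projIcc a b hab v : ℝ))
      have hπ : dist (projIcc a b hab u : ℝ) (projIcc a b hab v : ℝ) ≤ dist u v := by
        have := (LipschitzWith.projIcc hab).dist_le_mul u v
        rw [Subtype.dist_eq] at this
        simpa using this
      have h2 : dist (γ (projIcc a b hab u : ℝ)) (γ (projIcc a b hab v : ℝ)) ≤ dist u v := by
        rw [hγ _ (projIcc a b hab u).2 _ (projIcc a b hab v).2, ← Real.dist_eq]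
        exact hπ
      simp only [NNReal.coe_one, one_mul] at h1 ⊢
      exact le_trans h1 h2
    have hmem : Icc a b ⊆ Icc a b ∩ (fun u => infDist (γ (projIcc a b hab u : ℝ)) C) ⁻¹' Iic σ := by
      apply midpoint_dense
      · exact isClosed_Icc.inter (isClosed_Iic.preimage hcont)
      · refine ⟨left_mem_Icc.2 hab, ?_⟩
        show infDist (γ (projIcc a b hab a : ℝ)) C ∈ Iic σ
        rw [projIcc_coe hab (left_mem_Icc.2 hab)]
        exact ha
      · refine ⟨right_mem_Icc.2 hab, ?_⟩
        show infDist (γ (projIcc a b hab b : ℝ)) C ∈ Iic σ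
        rw [projIcc_coe hab (right_mem_Icc.2 hab)]
        exact hb
      · exact fun y hy => hy.1
      · rintro s ⟨hsI, hsV⟩ t' ⟨htI, htV⟩
        have hmI : (s + t') / 2 ∈ Icc a b := ⟨by linarith [hsI.1, htI.1], by linarith [hsI.2, htI.2]⟩
        refine ⟨hmI, ?_⟩
        show infDist (γ (projIcc a b hab ((s + t') / 2) : ℝ)) C ∈ Iic σ
        simp only [mem_Iic, mem_preimage] at hsV htV ⊢
        rw [projIcc_coe hab hmI]
        rw [projIcc_coe hab hsI] at hsV
        rw [projIcc_coe hab htI] at htV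
        obtain ⟨m1, m2⟩ := geod_mid hγ hsI htI
        have := infDist_midpoint hconv hCne m1 m2
        linarith
    have hvv := (hmem ht).2
    show infDist (γ t) C ≤ σ
    simp only [mem_preimage, mem_Iic] at hvv
    rw [projIcc_coe hab ht] at hvv
    exact hvv
  -- (c) every line parallel to a line in C lies in the σ-neighborhood (Morse property)
  have hNlines : ∀ ℓ : ℝ → X, IsGeodLine ℓ → ParallelToLineIn C ℓ →
      Set.range ℓ ⊆ {x : X | infDist x C ≤ σ} := by
    rintro ℓ hℓ ⟨ℓ₂, hℓ₂, hℓ₂C, M, hM⟩ xx ⟨t₀, rfl⟩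
    show infDist (ℓ t₀) C ≤ σ
    have hM0 : 0 ≤ M := le_trans dist_nonneg (hM 0)
    have hhb : ∀ t, infDist (ℓ t) C ≤ M := fun t =>
      le_trans (infDist_le_dist_of_mem (hℓ₂C t)) (hM t)
    have hhmid : ∀ s t : ℝ,
        infDist (ℓ ((s + t) / 2)) C ≤ (infDist (ℓ s) C + infDist (ℓ t) C) / 2 := by
      intro s t
      obtain ⟨m1, m2⟩ := line_mid hℓ s t
      exact infDist_midpoint hconv hCne m1 m2
    have hconst : ∀ s t : ℝ, infDist (ℓ s) C = infDist (ℓ t) C :=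
      const_of_midconvex_bdd hhb hhmid
    apply real_le_of_forall_pos
    intro ε hε
    set U : ℝ := M + σ + ε with hU
    have hU0 : 0 ≤ U := by linarith
    set T : ℝ := M + 1 + 4 * M * U / ε with hT
    have h4MU : 0 ≤ 4 * M * U / ε := by positivity
    have hT1 : M + 1 ≤ T := by rw [hT]; linarith
    obtain ⟨γ, hγ, hγ0, hγ1⟩ := CAT0.geodesic (ℓ 0) (ℓ₂ T)
    set L := dist (ℓ 0) (ℓ₂ T) with hLdef
    have hL0 : (0:ℝ) ≤ L := dist_nonneg
    have hTT : dist (ℓ 0) (ℓ T) = T := by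
      rw [hℓ 0 T, abs_of_nonpos (by linarith)]
      ring
    have hLlb : T - M ≤ L := by
      have h1 : dist (ℓ 0) (ℓ T) ≤ L + dist (ℓ₂ T) (ℓ T) := by
        calc dist (ℓ 0) (ℓ T) ≤ dist (ℓ 0) (ℓ₂ T) + dist (ℓ₂ T) (ℓ T) := dist_triangle _ _ _
          _ = L + dist (ℓ₂ T) (ℓ T) := by rw [hLdef]
      have h3 : dist (ℓ₂ T) (ℓ T) ≤ M := by rw [dist_comm]; exact hM T
      linarith [hTT]
    have hLub : L ≤ T + M := by
      calc L ≤ dist (ℓ 0) (ℓ T) + dist (ℓ T) (ℓ₂ T) := dist_triangle _ _ _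
        _ ≤ T + M := by linarith [hTT, hM T]
    have hL1 : (1:ℝ) ≤ L := by linarith
    have hLpos : (0:ℝ) < L := by linarith
    have hpj := hproj (ℓ 0) (ℓ₂ T) (hℓ₂C T) γ ⟨hγ, hγ0, hγ1⟩
    have hsegne : (geodSeg γ (ℓ 0) (ℓ₂ T)).Nonempty :=
      ⟨γ 0, 0, ⟨le_refl 0, dist_nonneg⟩, rfl⟩
    obtain ⟨z, hzseg, hzd⟩ := (infDist_lt_iff hsegne).mp
      (lt_of_le_of_lt hpj (by linarith : σ < σ + ε / 2))
    obtain ⟨u, huIcc, rfl⟩ := hzseg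
    have hu0 : dist (ℓ 0) (γ u) = u := by
      have h' := hγ 0 ⟨le_refl _, hL0⟩ u huIcc
      rw [hγ0] at h'
      rw [h', abs_of_nonpos (by linarith [huIcc.1])]
      ring
    have hdxp : dist (ℓ 0) (p (ℓ 0)) ≤ M := by rw [hpdist]; exact hhb 0
    have hub : u ≤ U := by
      have htr : dist (ℓ 0) (γ u) ≤ dist (ℓ 0) (p (ℓ 0)) + dist (p (ℓ 0)) (γ u) :=
        dist_triangle _ _ _
      rw [hu0] at htr
      simp only [hU]
      linarith
    have hDL : dist (γ L) (ℓ L) ≤ 2 * M := by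
      rw [hγ1]
      have habsTL : |T - L| ≤ M := abs_le.mpr ⟨by linarith, by linarith⟩
      calc dist (ℓ₂ T) (ℓ L) ≤ dist (ℓ₂ T) (ℓ T) + dist (ℓ T) (ℓ L) := dist_triangle _ _ _
        _ ≤ M + |T - L| := by
            have hc := hM T
            rw [dist_comm] at hc
            have := hℓ T L
            linarith [le_of_eq (hℓ T L)]
        _ ≤ 2 * M := by linarith
    have hchord : ∀ w ∈ Icc (0:ℝ) L, dist (γ w) (ℓ w) ≤ 2 * M * w / L := by
      have hcont2 := lipschitz_pair hL0 γ ℓ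
        (fun s hs t ht => le_of_eq (hγ s hs t ht)) (fun s _ t _ => le_of_eq (hℓ s t))
      have hcont3 : Continuous fun w : ℝ =>
          dist (γ (projIcc 0 L hL0 w : ℝ)) (ℓ (projIcc 0 L hL0 w : ℝ)) - 2 * M * w / L :=
        hcont2.sub (((continuous_const.mul continuous_id).div_const L))
      have hmem2 : Icc (0:ℝ) L ⊆ Icc (0:ℝ) L ∩
          (fun w => dist (γ (projIcc 0 L hL0 w : ℝ)) (ℓ (projIcc 0 L hL0 w : ℝ))
            - 2 * M * w / L) ⁻¹' Iic 0 := by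
        apply midpoint_dense
        · exact isClosed_Icc.inter (isClosed_Iic.preimage hcont3)
        · refine ⟨left_mem_Icc.2 hL0, ?_⟩
          show dist (γ (projIcc 0 L hL0 0 : ℝ)) (ℓ (projIcc 0 L hL0 0 : ℝ)) - 2 * M * 0 / L ∈ Iic 0
          simp only [mem_Iic]
          rw [projIcc_coe hL0 (left_mem_Icc.2 hL0), hγ0]
          simp
        · refine ⟨right_mem_Icc.2 hL0, ?_⟩
          show dist (γ (projIcc 0 L hL0 L : ℝ)) (ℓ (projIcc 0 L hL0 L : ℝ)) - 2 * M * L / L ∈ Iic 0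
          simp only [mem_Iic]
          rw [projIcc_coe hL0 (right_mem_Icc.2 hL0)]
          have hdiv : 2 * M * L / L = 2 * M := by field_simp
          rw [hdiv]
          linarith
        · exact fun y hy => hy.1
        · rintro s ⟨hsI, hsV⟩ t' ⟨htI, htV⟩
          have hmI : (s + t') / 2 ∈ Icc (0:ℝ) L :=
            ⟨by linarith [hsI.1, htI.1], by linarith [hsI.2, htI.2]⟩
          refine ⟨hmI, ?_⟩
          show dist (γ (projIcc 0 L hL0 ((s + t') / 2) : ℝ)) (ℓ (projIcc 0 L hL0 ((s + t') / 2) : ℝ))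
            - 2 * M * ((s + t') / 2) / L ∈ Iic 0
          simp only [mem_Iic, mem_preimage] at hsV htV ⊢
          rw [projIcc_coe hL0 hmI]
          rw [projIcc_coe hL0 hsI] at hsV
          rw [projIcc_coe hL0 htI] at htV
          obtain ⟨g1, g2⟩ := geod_mid hγ hsI htI
          obtain ⟨l1, l2⟩ := line_mid hℓ s t'
          have hq := quad_mid g1 g2 l1 l2
          have harith : (2 * M * s / L + 2 * M * t' / L) / 2 = 2 * M * ((s + t') / 2) / L := by
            ring
          linarith
      intro w hw
      have hthis := (hmem2 hw).2
      simp only [mem_preimage, mem_Iic] at hthis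
      rw [projIcc_coe hL0 hw] at hthis
      linarith
    have h1 : dist (γ u) (ℓ u) ≤ 2 * M * u / L := hchord u huIcc
    have h2 : 2 * M * u / L ≤ ε / 2 := by
      rw [div_le_div_iff₀ hLpos two_pos]
      have hMuU : M * u ≤ M * U := mul_le_mul_of_nonneg_left hub hM0
      have hεL : ε * (T - M) ≤ ε * L := mul_le_mul_of_nonneg_left hLlb (le_of_lt hε)
      have hTM : ε * (T - M) = ε + 4 * M * U := by
        rw [hT]
        field_simp
        ring
      nlinarith
    have hfinal : infDist (ℓ u) C ≤ σ + ε := by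
      have hcm : dist (γ u) (p (ℓ 0)) < σ + ε / 2 := by
        rw [dist_comm]; exact hzd
      calc infDist (ℓ u) C ≤ dist (ℓ u) (p (ℓ 0)) := infDist_le_dist_of_mem (hp (ℓ 0)).1
        _ ≤ dist (ℓ u) (γ u) + dist (γ u) (p (ℓ 0)) := dist_triangle _ _ _
        _ ≤ σ + ε := by
            rw [dist_comm (ℓ u) (γ u)]
            linarith
    rw [hconst t₀ u]
    exact hfinal
  have hNmem : {x : X | infDist x C ≤ σ} ∈ {D : Set X | GeodConvex D ∧ C ⊆ D ∧
      ∀ ℓ : ℝ → X, IsGeodLine ℓ → ParallelToLineIn C ℓ → Set.range ℓ ⊆ D} :=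
    ⟨hNconv, fun x hx => by
      simp only [mem_setOf_eq, infDist_zero_of_mem hx]; exact hσ, hNlines⟩
  have hpart1 : C' ⊆ {x : X | infDist x C ≤ σ} := by
    rw [hC']
    exact sInter_subset_of_mem hNmem
  refine ⟨hpart1, ?_⟩
  rintro ℓ hℓ ⟨ℓ₂, hℓ₂, hℓ₂C', M, hM⟩
  have hσ2 : ∀ t, dist (ℓ₂ t) (p (ℓ₂ t)) ≤ σ := by
    intro t
    rw [hpdist]
    exact hpart1 (hℓ₂C' t)
  have hKcomp : ∀ t : ℝ, IsCompact (C ∩ closedBall (ℓ₂ t) (2 * σ)) := fun t =>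
    (isCompact_closedBall _ _).inter_left hclosed
  have hFclosed : ∀ q : ℝ × ℝ, IsClosed {f : ℝ → X | dist (f q.1) (f q.2) = |q.1 - q.2|} :=
    fun q => isClosed_eq ((continuous_apply q.1).dist (continuous_apply q.2)) continuous_const
  have hmain : ((univ : Set ℝ).pi (fun t => C ∩ closedBall (ℓ₂ t) (2 * σ)) ∩
      ⋂ q : ℝ × ℝ, {f : ℝ → X | dist (f q.1) (f q.2) = |q.1 - q.2|}).Nonempty := by
    rw [nonempty_iff_ne_empty]
    intro hemp
    obtain ⟨w, hw⟩ := (isCompact_univ_pi hKcomp).elim_finite_subfamily_closed _ hFclosed hemp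
    set R : ℝ := 1 + ∑ q ∈ w, (|q.1| + |q.2|) with hR
    have hsum0 : 0 ≤ ∑ q ∈ w, (|q.1| + |q.2|) :=
      Finset.sum_nonneg fun i _ => by positivity
    have hR1 : 1 ≤ R := by simp only [hR]; linarith
    have hcoords : ∀ q ∈ w, |q.1| ≤ R - 1 ∧ |q.2| ≤ R - 1 := by
      intro q hq
      have hle : |q.1| + |q.2| ≤ ∑ q ∈ w, (|q.1| + |q.2|) :=
        Finset.single_le_sum (f := fun q : ℝ × ℝ => |q.1| + |q.2|)
          (fun i _ => by positivity) hq
      constructor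
      · simp only [hR]; linarith [abs_nonneg q.2]
      · simp only [hR]; linarith [abs_nonneg q.1]
    set n : ℝ := R + σ with hn
    have hn1 : 1 ≤ n := by simp only [hn]; linarith
    obtain ⟨γ, hγ, hγ0, hγ1⟩ := CAT0.geodesic (p (ℓ₂ (-n))) (p (ℓ₂ n))
    set L := dist (p (ℓ₂ (-n))) (p (ℓ₂ n)) with hLdef
    have hL0 : (0:ℝ) ≤ L := dist_nonneg
    have hll : dist (ℓ₂ (-n)) (ℓ₂ n) = 2 * n := by
      rw [hℓ₂ (-n) n, show -n - n = -(2*n) by ring, abs_neg, abs_of_nonneg (by linarith)]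
    have hAC : p (ℓ₂ (-n)) ∈ C := (hp _).1
    have hBC : p (ℓ₂ n) ∈ C := (hp _).1
    have hLlb : 2 * n - 2 * σ ≤ L := by
      have h4 : dist (ℓ₂ (-n)) (ℓ₂ n) ≤ dist (ℓ₂ (-n)) (p (ℓ₂ (-n))) + L + dist (p (ℓ₂ n)) (ℓ₂ n) :=
        dist_triangle4 _ _ _ _
      have h5 : dist (p (ℓ₂ n)) (ℓ₂ n) ≤ σ := by rw [dist_comm]; exact hσ2 n
      linarith [hσ2 (-n), hll]
    have hLub : L ≤ 2 * n + 2 * σ := by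
      have h4 : L ≤ dist (p (ℓ₂ (-n))) (ℓ₂ (-n)) + dist (ℓ₂ (-n)) (ℓ₂ n) + dist (ℓ₂ n) (p (ℓ₂ n)) :=
        dist_triangle4 _ _ _ _
      have h5 : dist (p (ℓ₂ (-n))) (ℓ₂ (-n)) ≤ σ := by rw [dist_comm]; exact hσ2 (-n)
      linarith [hσ2 n, hll]
    have hRL : R ≤ L / 2 := by simp only [hn] at hLlb; linarith
    have hle : -(L/2) ≤ L/2 := by linarith
    have hParam : ∀ s ∈ Icc (-(L/2)) (L/2), L/2 + s ∈ Icc (0:ℝ) L := fun s hs =>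
      ⟨by linarith [hs.1], by linarith [hs.2]⟩
    have hstrip : ∀ s ∈ Icc (-(L/2)) (L/2), dist (ℓ₂ s) (γ (L/2 + s)) ≤ 2 * σ := by
      have hcont2 := lipschitz_pair hle ℓ₂ (fun s => γ (L/2 + s))
        (fun s _ t _ => le_of_eq (hℓ₂ s t))
        (fun s hs t ht => by
          rw [hγ _ (hParam s hs) _ (hParam t ht),
            show L/2 + s - (L/2 + t) = s - t by ring])
      have hmem3 : Icc (-(L/2)) (L/2) ⊆ Icc (-(L/2)) (L/2) ∩
          (fun s => dist (ℓ₂ (projIcc (-(L/2)) (L/2) hle s : ℝ))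
            (γ (L/2 + (projIcc (-(L/2)) (L/2) hle s : ℝ)))) ⁻¹' Iic (2*σ) := by
        apply midpoint_dense
        · exact isClosed_Icc.inter (isClosed_Iic.preimage hcont2)
        · refine ⟨left_mem_Icc.2 hle, ?_⟩
          show dist (ℓ₂ (projIcc (-(L/2)) (L/2) hle (-(L/2)) : ℝ))
            (γ (L/2 + (projIcc (-(L/2)) (L/2) hle (-(L/2)) : ℝ))) ∈ Iic (2*σ)
          simp only [mem_Iic]
          rw [projIcc_coe hle (left_mem_Icc.2 hle)]
          rw [show L/2 + -(L/2) = (0:ℝ) by ring, hγ0]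
          have habs : |(-(L/2)) - (-n)| ≤ σ := abs_le.mpr ⟨by linarith, by linarith⟩
          calc dist (ℓ₂ (-(L/2))) (p (ℓ₂ (-n)))
              ≤ dist (ℓ₂ (-(L/2))) (ℓ₂ (-n)) + dist (ℓ₂ (-n)) (p (ℓ₂ (-n))) := dist_triangle _ _ _
            _ ≤ σ + σ := by
                rw [hℓ₂ (-(L/2)) (-n)]
                linarith [hσ2 (-n), habs]
            _ = 2 * σ := by ring
        · refine ⟨right_mem_Icc.2 hle, ?_⟩
          show dist (ℓ₂ (projIcc (-(L/2)) (L/2) hle (L/2) : ℝ))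
            (γ (L/2 + (projIcc (-(L/2)) (L/2) hle (L/2) : ℝ))) ∈ Iic (2*σ)
          simp only [mem_Iic]
          rw [projIcc_coe hle (right_mem_Icc.2 hle)]
          rw [show L/2 + L/2 = L by ring, hγ1]
          have habs : |(L/2) - n| ≤ σ := abs_le.mpr ⟨by linarith, by linarith⟩
          calc dist (ℓ₂ (L/2)) (p (ℓ₂ n))
              ≤ dist (ℓ₂ (L/2)) (ℓ₂ n) + dist (ℓ₂ n) (p (ℓ₂ n)) := dist_triangle _ _ _
            _ ≤ σ + σ := by
                rw [hℓ₂ (L/2) n]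
                linarith [hσ2 n, habs]
            _ = 2 * σ := by ring
        · exact fun y hy => hy.1
        · rintro s ⟨hsI, hsV⟩ t' ⟨htI, htV⟩
          have hmI : (s + t') / 2 ∈ Icc (-(L/2)) (L/2) :=
            ⟨by linarith [hsI.1, htI.1], by linarith [hsI.2, htI.2]⟩
          refine ⟨hmI, ?_⟩
          show dist (ℓ₂ (projIcc (-(L/2)) (L/2) hle ((s + t') / 2) : ℝ))
            (γ (L/2 + (projIcc (-(L/2)) (L/2) hle ((s + t') / 2) : ℝ))) ∈ Iic (2*σ)
          simp only [mem_Iic, mem_preimage] at hsV htV ⊢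
          rw [projIcc_coe hle hmI]
          rw [projIcc_coe hle hsI] at hsV
          rw [projIcc_coe hle htI] at htV
          obtain ⟨l1, l2⟩ := line_mid hℓ₂ s t'
          have g12 := geod_mid hγ (hParam s hsI) (hParam t' htI)
          rw [show (L/2 + s + (L/2 + t')) / 2 = L/2 + (s + t')/2 by ring] at g12
          obtain ⟨g1, g2⟩ := g12
          have hq := quad_mid l1 l2 g1 g2
          linarith
      intro s hs
      have hthis := (hmem3 hs).2
      simp only [mem_preimage, mem_Iic] at hthis
      rw [projIcc_coe hle hs] at hthis
      exact hthis
    classical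
    set f : ℝ → X := fun t => if |t| ≤ R then γ (L/2 + t) else p (ℓ₂ t) with hf
    have hfK : f ∈ (univ : Set ℝ).pi (fun t => C ∩ closedBall (ℓ₂ t) (2 * σ)) := by
      intro t _
      by_cases hcase : |t| ≤ R
      · have habs := abs_le.mp hcase
        have htmem : t ∈ Icc (-(L/2)) (L/2) := ⟨by linarith, by linarith⟩
        simp only [hf, if_pos hcase]
        constructor
        · refine hconv γ 0 L hL0 hγ (by rw [hγ0]; exact hAC) (by rw [hγ1]; exact hBC)
            (L/2 + t) (hParam t htmem)
        · rw [mem_closedBall, dist_comm]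
          exact hstrip t htmem
      · simp only [hf, if_neg hcase]
        exact ⟨(hp _).1, by rw [mem_closedBall, dist_comm]; linarith [hσ2 t]⟩
    have hfF : ∀ q ∈ w, f ∈ {g : ℝ → X | dist (g q.1) (g q.2) = |q.1 - q.2|} := by
      intro q hq
      obtain ⟨h1, h2⟩ := hcoords q hq
      have hc1 : |q.1| ≤ R := by linarith
      have hc2 : |q.2| ≤ R := by linarith
      have ha1 := abs_le.mp hc1
      have ha2 := abs_le.mp hc2
      have e1 : f q.1 = γ (L/2 + q.1) := by simp only [hf, if_pos hc1]
      have e2 : f q.2 = γ (L/2 + q.2) := by simp only [hf, if_pos hc2]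
      show dist (f q.1) (f q.2) = |q.1 - q.2|
      rw [e1, e2, hγ (L/2 + q.1) ⟨by linarith, by linarith⟩ (L/2 + q.2) ⟨by linarith, by linarith⟩,
        show L/2 + q.1 - (L/2 + q.2) = q.1 - q.2 by ring]
    exact eq_empty_iff_forall_notMem.mp hw f ⟨hfK, mem_iInter₂.mpr hfF⟩
  obtain ⟨ℓ₃, hℓ₃pi, hℓ₃F⟩ := hmain
  have hline3 : IsGeodLine ℓ₃ := fun s t => mem_iInter.mp hℓ₃F (s, t)
  have hin3 : ∀ t : ℝ, ℓ₃ t ∈ C := fun t => (hℓ₃pi t (mem_univ t)).1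
  have hnear : ∀ t : ℝ, dist (ℓ₂ t) (ℓ₃ t) ≤ 2 * σ := fun t => by
    have h := (hℓ₃pi t (mem_univ t)).2
    rw [mem_closedBall] at h
    rw [dist_comm]
    exact h
  rw [hC']
  intro xx hxx
  apply mem_sInter.mpr
  intro D hD
  exact hD.2.2 ℓ hℓ ⟨ℓ₃, hline3, hin3, M + 2 * σ, fun t =>
    calc dist (ℓ t) (ℓ₃ t) ≤ dist (ℓ t) (ℓ₂ t) + dist (ℓ₂ t) (ℓ₃ t) := dist_triangle _ _ _
      _ ≤ M + 2 * σ := by linarith [hM t, hnear t]⟩ hxx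
end

section
/- Let δ > δ₀ > 0 and suppose 1 = n₁ < n₂ < ⋯ is a sequence such that ∑_{n=n_j}^{n_{j+1}−1} e^{−(δ−δ₀)φ(n)} Q(φ(n)) > j for all j ≥ 1, where φ : [0,∞) → [0,∞) is slowly varying and Q is a positive polynomial. Define ψ(t) = (δ−δ₀)^{−1} log √j for n_j ≤ t < n_{j+1}. Then ψ is nonnegative, slowly varying, and the series ∑_{n} e^{−(δ−δ₀)(φ+ψ)(n)} Q((φ+ψ)(n)) diverges. -/
open Finset

/-- `f : [0,∞) → ℝ` is slowly varying: there are `B, A > 0` such that `|x - y| ≤ B`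
implies `|f x - f y| ≤ A`. -/
def SlowlyVarying (f : ℝ → ℝ) : Prop :=
  ∃ B : ℝ, 0 < B ∧ ∃ A : ℝ, 0 < A ∧
    ∀ x y : ℝ, 0 ≤ x → 0 ≤ y → |x - y| ≤ B → |f x - f y| ≤ A

lemma my_poly_lower (Q : Polynomial ℝ) (hQ : ∀ x : ℝ, 0 < Q.eval x) :
    ∃ ε : ℝ, 0 < ε ∧ ∀ x s : ℝ, 0 ≤ x → 0 ≤ s → ε * Q.eval x ≤ Q.eval (x + s) := by
  -- eventual nonnegativity of the derivative
  have hev : ∀ᶠ x in Filter.atTop, 0 ≤ (Polynomial.derivative Q).eval x := by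
    by_cases hd : Q.natDegree = 0
    · have h0 : Polynomial.derivative Q = 0 := by
        rcases Polynomial.natDegree_eq_zero.mp hd with ⟨c, rfl⟩; simp
      simp [h0]
    · have hdpos : 0 < Q.natDegree := Nat.pos_of_ne_zero hd
      have hlc : 0 < Q.leadingCoeff := by
        rcases lt_or_ge 0 Q.leadingCoeff with h | h
        · exact h
        · exfalso
          have ht := Polynomial.tendsto_atBot_of_leadingCoeff_nonpos Q
            (Polynomial.natDegree_pos_iff_degree_pos.mp hdpos) h
          obtain ⟨x, hx⟩ := (ht.eventually (Filter.eventually_le_atBot (-1))).exists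
          nlinarith [hQ x]
      set P := Polynomial.derivative Q with hP
      have hdeg : P.degree = ((Q.natDegree - 1 : ℕ) : WithBot ℕ) :=
        Polynomial.degree_derivative_eq Q hdpos
      have hnd : P.natDegree = Q.natDegree - 1 := Polynomial.natDegree_eq_of_degree_eq_some hdeg
      have hlcP : 0 < P.leadingCoeff := by
        have : P.leadingCoeff = Q.coeff (Q.natDegree - 1 + 1) * ((Q.natDegree - 1 : ℕ) + 1) := by
          rw [Polynomial.leadingCoeff, hnd, Polynomial.coeff_derivative]
        rw [this]
        have h1 : Q.natDegree - 1 + 1 = Q.natDegree := by omega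
        rw [h1, ← Polynomial.leadingCoeff]
        positivity
      rcases lt_or_ge 0 P.degree with hPd | hPd
      · exact (Polynomial.tendsto_atTop_of_leadingCoeff_nonneg P hPd hlcP.le).eventually
          (Filter.eventually_ge_atTop 0)
      · have := Polynomial.eq_C_of_degree_le_zero hPd
        have hc : P.coeff 0 = P.leadingCoeff := by
          rw [Polynomial.leadingCoeff, hnd]
          by_cases h1 : Q.natDegree = 1
          · simp [h1]
          · exfalso
            have : P.degree = ((Q.natDegree - 1 : ℕ) : WithBot ℕ) := hdeg
            rw [this] at hPd
            have : (Q.natDegree - 1 : ℕ) = 0 := by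
              by_contra hne
              exact absurd hPd (not_le.mpr (by exact_mod_cast Nat.pos_of_ne_zero hne))
            omega
        filter_upwards with x
        rw [this, Polynomial.eval_C, hc]
        exact hlcP.le
  obtain ⟨C₀, hC₀⟩ := Filter.eventually_atTop.mp hev
  set C := max C₀ 0 with hC
  have hC0 : 0 ≤ C := le_max_right _ _
  have hmonQ : MonotoneOn (fun x => Q.eval x) (Set.Ici C) := by
    apply monotoneOn_of_deriv_nonneg (convex_Ici C)
      (Q.continuous.continuousOn)
    · intro x hx
      exact Q.differentiable.differentiableAt.differentiableWithinAt
    · intro x hx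
      rw [interior_Ici] at hx
      rw [Polynomial.deriv]
      exact hC₀ x (le_trans (le_max_left _ _) hx.le)
  have hne : (Set.Icc (0:ℝ) C).Nonempty := ⟨0, by simp [hC0]⟩
  obtain ⟨xa, hxa, hmin⟩ := isCompact_Icc.exists_isMinOn hne
    (Q.continuous.continuousOn)
  obtain ⟨xb, hxb, hmax⟩ := isCompact_Icc.exists_isMaxOn hne
    (Q.continuous.continuousOn)
  set m := Q.eval xa with hm
  set M := Q.eval xb with hM
  have hm0 : 0 < m := hQ _
  have hM0 : 0 < M := hQ _
  refine ⟨min 1 (m / M), lt_min one_pos (by positivity), fun x s hx hs => ?_⟩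
  rcases le_or_gt C x with h | h
  · have h1 : Q.eval x ≤ Q.eval (x + s) := hmonQ (Set.mem_Ici.mpr h)
      (Set.mem_Ici.mpr (by linarith)) (by linarith)
    have h2 : min 1 (m / M) * Q.eval x ≤ 1 * Q.eval x :=
      mul_le_mul_of_nonneg_right (min_le_left _ _) (hQ x).le
    linarith
  · have hxm : Q.eval x ≤ M := hmax ⟨hx, h.le⟩
    have h2 : min 1 (m / M) * Q.eval x ≤ (m / M) * M :=
      mul_le_mul (min_le_right _ _) hxm (hQ x).le (by positivity)
    have h3 : (m / M) * M = m := by field_simp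
    have h4 : m ≤ Q.eval (x + s) := by
      rcases le_or_gt (x + s) C with h5 | h5
      · exact hmin ⟨by linarith, h5⟩
      · have h7 : m ≤ Q.eval C := hmin (Set.right_mem_Icc.mpr hC0)
        have h6 : Q.eval C ≤ Q.eval (x + s) := hmonQ (Set.mem_Ici.mpr le_rfl)
          (Set.mem_Ici.mpr h5.le) h5.le
        linarith
    linarith

lemma my_find_block (n : ℕ → ℕ) (hmono : StrictMono n) (hn1 : n 1 = 1) :
    ∀ t : ℝ, 1 ≤ t → ∃ j : ℕ, 1 ≤ j ∧ (n j : ℝ) ≤ t ∧ t < n (j + 1) := by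
  intro t ht
  have ht0 : 0 ≤ t := by linarith
  set m := ⌊t⌋₊ with hmdef
  have hm1 : 1 ≤ m := Nat.le_floor (by exact_mod_cast ht)
  set j := Nat.findGreatest (fun j => n j ≤ m) m with hj
  have h1 : n 1 ≤ m := by rw [hn1]; exact hm1
  have hj1 : 1 ≤ j := Nat.le_findGreatest hm1 h1
  have hjle : n j ≤ m := by
    rw [hj]
    exact Nat.findGreatest_spec (P := fun j => n j ≤ m) (m := 1) (n := m) hm1 h1
  have hju : m < n (j + 1) := by
    by_contra hcon
    push_neg at hcon
    have hk : j + 1 ≤ m := le_trans (hmono.le_apply) hcon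
    exact Nat.findGreatest_is_greatest (Nat.lt_succ_self j) hk hcon
  refine ⟨j, hj1, ?_, ?_⟩
  · calc (n j : ℝ) ≤ m := by exact_mod_cast hjle
      _ ≤ t := Nat.floor_le ht0
  · calc t < m + 1 := Nat.lt_floor_add_one t
      _ ≤ n (j + 1) := by exact_mod_cast hju

/-- The key construction from Lemma 6.6: given `δ > δ₀ > 0`, a slowly varying
nonnegative `φ`, a positive polynomial `Q`, and indices `1 = n₁ < n₂ < ⋯` with
`∑_{n = n_j}^{n_{j+1}-1} e^{-(δ-δ₀)φ(n)} Q(φ(n)) > j`, the function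
`ψ(t) = (δ-δ₀)⁻¹ log √j` on `[n_j, n_{j+1})` is nonnegative, slowly varying, and
`∑_n e^{-(δ-δ₀)(φ+ψ)(n)} Q((φ+ψ)(n))` diverges. -/
theorem psi_construction
    (δ δ₀ : ℝ) (h0 : 0 < δ₀) (hδ : δ₀ < δ)
    (φ : ℝ → ℝ) (hφ0 : ∀ t : ℝ, 0 ≤ t → 0 ≤ φ t) (hφ : SlowlyVarying φ)
    (Q : Polynomial ℝ) (hQ : ∀ x : ℝ, 0 < Q.eval x)
    (n : ℕ → ℕ) (hmono : StrictMono n) (hn1 : n 1 = 1)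
    (hsum : ∀ j : ℕ, 1 ≤ j →
      (j : ℝ) < ∑ k ∈ Finset.Ico (n j) (n (j + 1)),
        Real.exp (-(δ - δ₀) * φ k) * Q.eval (φ k))
    (ψ : ℝ → ℝ)
    (hψdef : ∀ j : ℕ, 1 ≤ j → ∀ t : ℝ, (n j : ℝ) ≤ t → t < n (j + 1) →
      ψ t = (δ - δ₀)⁻¹ * Real.log (Real.sqrt j))
    (hψ0 : ∀ t : ℝ, 0 ≤ t → t < 1 → ψ t = 0) :
    (∀ t : ℝ, 0 ≤ t → 0 ≤ ψ t) ∧ SlowlyVarying ψ ∧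
      ¬ Summable (fun k : ℕ =>
        Real.exp (-(δ - δ₀) * (φ k + ψ k)) * Q.eval (φ k + ψ k)) := by
  have ha : 0 < δ - δ₀ := by linarith
  -- Part 1 : nonnegativity
  have part1 : ∀ t : ℝ, 0 ≤ t → 0 ≤ ψ t := by
    intro t ht
    rcases lt_or_ge t 1 with h | h
    · rw [hψ0 t ht h]
    · obtain ⟨j, hj1, hjl, hju⟩ := my_find_block n hmono hn1 t h
      rw [hψdef j hj1 t hjl hju]
      have h1 : (1:ℝ) ≤ Real.sqrt j := Real.one_le_sqrt.mpr (by exact_mod_cast hj1)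
      exact mul_nonneg (inv_nonneg.mpr ha.le) (Real.log_nonneg h1)
  refine ⟨part1, ?_, ?_⟩
  -- Part 2 : slowly varying
  · have key : ∀ x y : ℝ, 0 ≤ x → x ≤ y → y - x ≤ 1 →
        |ψ x - ψ y| ≤ (δ - δ₀)⁻¹ * Real.log 2 := by
      intro x y hx hxy hd
      have hA0 : 0 ≤ (δ - δ₀)⁻¹ * Real.log 2 :=
        mul_nonneg (inv_nonneg.mpr ha.le) (Real.log_nonneg one_le_two)
      have hy : 0 ≤ y := le_trans hx hxy
      rcases lt_or_ge y 1 with h | h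
      · rw [hψ0 x hx (lt_of_le_of_lt hxy h), hψ0 y hy h]
        simpa using hA0
      · obtain ⟨j', hj'1, hj'l, hj'u⟩ := my_find_block n hmono hn1 y h
        rw [hψdef j' hj'1 y hj'l hj'u]
        rcases lt_or_ge x 1 with hx1 | hx1
        · have hj'eq : j' = 1 := by
            by_contra hne
            have h2 : 2 ≤ j' := by omega
            have h3 : n 2 ≤ n j' := hmono.monotone h2
            have hn2 : 2 ≤ n 2 := by
              have := hmono (show 1 < 2 by norm_num); omega
            have h4 : (2:ℝ) ≤ (n j' : ℝ) := by exact_mod_cast le_trans hn2 h3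
            linarith
          rw [hψ0 x hx hx1, hj'eq]
          simpa using hA0
        · obtain ⟨j, hj1, hjl, hju⟩ := my_find_block n hmono hn1 x hx1
          rw [hψdef j hj1 x hjl hju]
          have hle : j ≤ j' := by
            by_contra hcon
            push_neg at hcon
            have h1 : n (j' + 1) ≤ n j := hmono.monotone hcon
            have h2 : ((n (j' + 1) : ℕ) : ℝ) ≤ ((n j : ℕ) : ℝ) := by exact_mod_cast h1
            linarith
          have hge : j' ≤ j + 1 := by
            by_contra hcon
            push_neg at hcon
            have h1 : n (j + 2) ≤ n j' := hmono.monotone (by omega)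
            have h2 : n (j + 1) + 1 ≤ n (j + 2) := hmono (by omega)
            have h3 : ((n (j + 1) : ℕ) : ℝ) + 1 ≤ ((n j' : ℕ) : ℝ) := by
              exact_mod_cast le_trans h2 h1
            linarith
          have hcase : j' = j ∨ j' = j + 1 := by omega
          rcases hcase with h' | h'
          · rw [h']
            simpa using hA0
          · rw [h']
            have hj0 : (0:ℝ) < (j : ℝ) := by exact_mod_cast hj1
            have hcast : ((j + 1 : ℕ) : ℝ) = (j : ℝ) + 1 := by push_cast; ring
            rw [Real.log_sqrt hj0.le, hcast, Real.log_sqrt (by positivity)]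
            have hmono' : Real.log (j : ℝ) ≤ Real.log ((j : ℝ) + 1) :=
              Real.log_le_log hj0 (by linarith)
            have hlog : Real.log ((j:ℝ) + 1) - Real.log (j : ℝ) ≤ Real.log 2 := by
              rw [← Real.log_div (by positivity) (by positivity)]
              apply Real.log_le_log (by positivity)
              rw [div_le_iff₀ hj0]
              have : (1:ℝ) ≤ (j:ℝ) := by exact_mod_cast hj1
              linarith
            have hlog2 : 0 ≤ Real.log 2 := Real.log_nonneg one_le_two
            rw [abs_sub_comm, abs_of_nonneg (by
              have := inv_nonneg.mpr ha.le
              nlinarith)]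
            have h1 : (Real.log ((j:ℝ)+1) / 2 - Real.log (j:ℝ) / 2) ≤ Real.log 2 := by
              linarith
            have h2 : (δ - δ₀)⁻¹ * (Real.log ((j:ℝ)+1) / 2) - (δ - δ₀)⁻¹ * (Real.log (j:ℝ) / 2)
                = (δ - δ₀)⁻¹ * (Real.log ((j:ℝ)+1) / 2 - Real.log (j:ℝ) / 2) := by ring
            rw [h2]
            exact mul_le_mul_of_nonneg_left h1 (inv_nonneg.mpr ha.le)
    refine ⟨1, one_pos, (δ - δ₀)⁻¹ * Real.log 2,
      mul_pos (inv_pos.mpr ha) (Real.log_pos one_lt_two), fun x y hx hy hxy => ?_⟩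
    rcases le_total x y with h | h
    · exact key x y hx h (by rw [abs_sub_comm] at hxy; linarith [abs_le.mp hxy])
    · rw [abs_sub_comm]
      exact key y x hy h (by linarith [abs_le.mp hxy])
  -- Part 3 : divergence
  · obtain ⟨ε, hε, hpoly⟩ := my_poly_lower Q hQ
    intro hS
    set f := fun k : ℕ => Real.exp (-(δ - δ₀) * (φ k + ψ k)) * Q.eval (φ k + ψ k) with hfdef
    have hblock : ∀ j : ℕ, 1 ≤ j → ε ≤ ∑ k ∈ Finset.Ico (n j) (n (j + 1)), f k := by
      intro j hj
      have hsj : (1:ℝ) ≤ Real.sqrt j := Real.one_le_sqrt.mpr (by exact_mod_cast hj)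
      have hsj0 : (0:ℝ) < Real.sqrt j := by linarith
      have hterm : ∀ k ∈ Finset.Ico (n j) (n (j + 1)),
          (Real.sqrt j)⁻¹ * ε * (Real.exp (-(δ - δ₀) * φ k) * Q.eval (φ k)) ≤ f k := by
        intro k hk
        rw [Finset.mem_Ico] at hk
        have hkl : (n j : ℝ) ≤ (k : ℝ) := by exact_mod_cast hk.1
        have hku : (k : ℝ) < (n (j + 1) : ℝ) := by exact_mod_cast hk.2
        have hψk : ψ k = (δ - δ₀)⁻¹ * Real.log (Real.sqrt j) := hψdef j hj k hkl hku
        have hφk : 0 ≤ φ k := hφ0 k (Nat.cast_nonneg k)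
        have hψk0 : 0 ≤ ψ k := part1 k (Nat.cast_nonneg k)
        have hexp : Real.exp (-(δ - δ₀) * (φ k + ψ k))
            = Real.exp (-(δ - δ₀) * φ k) * (Real.sqrt j)⁻¹ := by
          rw [hψk]
          have heq : -(δ - δ₀) * (φ k + (δ - δ₀)⁻¹ * Real.log (Real.sqrt j))
              = -(δ - δ₀) * φ k + (- Real.log (Real.sqrt j)) := by
            field_simp
            ring
          rw [heq, Real.exp_add, Real.exp_neg, Real.exp_log hsj0]
        have hQk : ε * Q.eval (φ k) ≤ Q.eval (φ k + ψ k) := hpoly (φ k) (ψ k) hφk hψk0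
        have hpos : 0 ≤ Real.exp (-(δ - δ₀) * φ k) * (Real.sqrt j)⁻¹ := by positivity
        calc (Real.sqrt j)⁻¹ * ε * (Real.exp (-(δ - δ₀) * φ k) * Q.eval (φ k))
            = Real.exp (-(δ - δ₀) * φ k) * (Real.sqrt j)⁻¹ * (ε * Q.eval (φ k)) := by ring
          _ ≤ Real.exp (-(δ - δ₀) * φ k) * (Real.sqrt j)⁻¹ * Q.eval (φ k + ψ k) :=
              mul_le_mul_of_nonneg_left hQk hpos
          _ = f k := by rw [hfdef]; dsimp only; rw [hexp]
      have hsum2 : (Real.sqrt j)⁻¹ * ε *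
          (∑ k ∈ Finset.Ico (n j) (n (j + 1)), Real.exp (-(δ - δ₀) * φ k) * Q.eval (φ k))
          ≤ ∑ k ∈ Finset.Ico (n j) (n (j + 1)), f k := by
        rw [Finset.mul_sum]
        exact Finset.sum_le_sum hterm
      have hjS := hsum j hj
      have hsqj : Real.sqrt j ≤ (j : ℝ) := by
        have h1 : Real.sqrt j ≤ Real.sqrt ((j : ℝ) ^ 2) := by
          apply Real.sqrt_le_sqrt
          nlinarith [show (1:ℝ) ≤ (j:ℝ) by exact_mod_cast hj]
        rwa [Real.sqrt_sq (by positivity)] at h1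
      calc ε = (Real.sqrt j)⁻¹ * ε * Real.sqrt j := by field_simp
        _ ≤ (Real.sqrt j)⁻¹ * ε *
            (∑ k ∈ Finset.Ico (n j) (n (j + 1)), Real.exp (-(δ - δ₀) * φ k) * Q.eval (φ k)) := by
            apply mul_le_mul_of_nonneg_left _ (by positivity)
            linarith
        _ ≤ _ := hsum2
    have htend : Filter.Tendsto (fun j => ∑ k ∈ Finset.Ico (n j) (n (j + 1)), f k)
        Filter.atTop (nhds 0) := by
      have h1 := hS.hasSum.tendsto_sum_nat
      have h2 : Filter.Tendsto (fun j : ℕ => n j) Filter.atTop Filter.atTop :=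
        hmono.tendsto_atTop
      have h3 := h1.comp (h2.comp (Filter.tendsto_add_atTop_nat 1))
      have h4 := h1.comp h2
      have h5 := h3.sub h4
      rw [sub_self] at h5
      have heq : (fun j => ∑ k ∈ Finset.Ico (n j) (n (j + 1)), f k)
          = fun j => (∑ k ∈ Finset.range (n (j + 1)), f k) - ∑ k ∈ Finset.range (n j), f k := by
        funext j
        exact Finset.sum_Ico_eq_sub _ (hmono (Nat.lt_succ_self j)).le
      rw [heq]
      exact h5
    have hev := htend.eventually_lt_const hε
    obtain ⟨j, hj1, hj2⟩ := ((hev.and (Filter.eventually_ge_atTop 1)).exists)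
    exact absurd (hblock j hj2) (not_le.mpr hj1)
end

section
/- Let X be a proper CAT(0) space and suppose C ⊂ X is a closed convex Morse subset containing all geodesic lines in X parallel to a geodesic line in C, and that a group Γ₀ ⊂ Isom(X) acts cocompactly on C. Then for any r > ε > 0 there exists C₀ = C₀(r,ε) > 0 such that: if ℓ : [a,b] → X is a geodesic segment with ℓ([a,b]) ⊂ N_r(C), then ℓ([a+C₀, b−C₀]) ⊂ N_ε(C) (whenever a + C₀ ≤ b − C₀). -/
open Set Metric

/-- `γ` is an `(A,B)`-quasi-geodesic on `[a,b]`. -/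
def IsQuasiGeodesicOn {X : Type*} [MetricSpace X] (A B : ℝ) (γ : ℝ → X) (a b : ℝ) : Prop :=
  ∀ s ∈ Set.Icc a b, ∀ t ∈ Set.Icc a b,
    A⁻¹ * |s - t| - B ≤ dist (γ s) (γ t) ∧ dist (γ s) (γ t) ≤ A * |s - t| + B

/-- A convex subset `C` is Morse if every quasi-geodesic with endpoints in `C` stays
within a bounded distance of `C`, with bound depending only on the quasi-geodesic
constants. -/
def IsMorse {X : Type*} [MetricSpace X] (C : Set X) : Prop :=
  ∀ A : ℝ, 1 ≤ A → ∀ B : ℝ, 0 ≤ B → ∃ D : ℝ, 0 < D ∧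
    ∀ γ : ℝ → X, ∀ a b : ℝ, a ≤ b → IsQuasiGeodesicOn A B γ a b →
      γ a ∈ C → γ b ∈ C → ∀ t ∈ Set.Icc a b, Metric.infDist (γ t) C ≤ D

section AuxLemmas
variable {X : Type*} [MetricSpace X]

/-- Midpoints of two geodesics from a common start point. -/
lemma cat0_mid_shared [CAT0 X] (x y₁ y₂ m₁ m₃ : X)
    (h1 : dist x m₁ = dist x y₁ / 2) (h1' : dist m₁ y₁ = dist x y₁ / 2)
    (h3 : dist x m₃ = dist x y₂ / 2) (h3' : dist m₃ y₂ = dist x y₂ / 2) :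
    dist m₁ m₃ ≤ dist y₁ y₂ / 2 := by
  have A := CAT0.cn (X := X) y₂ x y₁ m₁ h1 h1'
  have B := CAT0.cn (X := X) m₁ x y₂ m₃ h3 h3'
  rw [dist_comm m₁ x, h1] at B
  rw [dist_comm y₂ x] at A
  have hd : (0:ℝ) ≤ dist m₁ m₃ := dist_nonneg
  have hs : (0:ℝ) ≤ dist y₁ y₂ := dist_nonneg
  rw [dist_comm y₂ y₁] at A
  rw [dist_comm m₁ y₂] at B
  nlinarith [sq_nonneg (dist m₁ m₃ + dist y₁ y₂ / 2), sq_nonneg (dist m₁ m₃ - dist y₁ y₂ / 2)]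

/-- CAT(0) midpoint comparison: distance between midpoints of two geodesics
is at most the average of the distances of the endpoints. -/
lemma cat0_mid_cmp [CAT0 X] (x₁ y₁ x₂ y₂ m₁ m₂ : X)
    (h1 : dist x₁ m₁ = dist x₁ y₁ / 2) (h1' : dist m₁ y₁ = dist x₁ y₁ / 2)
    (h2 : dist x₂ m₂ = dist x₂ y₂ / 2) (h2' : dist m₂ y₂ = dist x₂ y₂ / 2) :
    dist m₁ m₂ ≤ (dist x₁ x₂ + dist y₁ y₂) / 2 := by
  obtain ⟨γ, hγ, hγ0, hγ1⟩ := CAT0.geodesic x₁ y₂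
  set Lg := dist x₁ y₂ with hLg
  have hL0 : (0:ℝ) ≤ Lg := dist_nonneg
  have hmemL : Lg / 2 ∈ Set.Icc (0:ℝ) Lg := ⟨by linarith, by linarith⟩
  have hmem0 : (0:ℝ) ∈ Set.Icc (0:ℝ) Lg := ⟨le_refl _, hL0⟩
  have hmem1 : Lg ∈ Set.Icc (0:ℝ) Lg := ⟨hL0, le_refl _⟩
  have hm3a : dist x₁ (γ (Lg/2)) = Lg / 2 := by
    rw [← hγ0, hγ 0 hmem0 (Lg/2) hmemL]
    rw [abs_of_nonpos (by linarith)]; ring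
  have hm3b : dist (γ (Lg/2)) y₂ = Lg / 2 := by
    rw [← hγ1, hγ (Lg/2) hmemL Lg hmem1]
    rw [abs_of_nonpos (by linarith)]; ring
  have e1 : dist m₁ (γ (Lg/2)) ≤ dist y₁ y₂ / 2 :=
    cat0_mid_shared x₁ y₁ y₂ m₁ (γ (Lg/2)) h1 h1' hm3a hm3b
  have e2 : dist (γ (Lg/2)) m₂ ≤ dist x₁ x₂ / 2 := by
    rw [dist_comm]
    rw [dist_comm x₁ x₂]
    refine cat0_mid_shared y₂ x₂ x₁ m₂ (γ (Lg/2)) ?_ ?_ ?_ ?_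
    · rw [dist_comm y₂ m₂, dist_comm y₂ x₂]; exact h2'
    · rw [dist_comm m₂ x₂, dist_comm y₂ x₂]; exact h2
    · rw [dist_comm y₂ (γ (Lg/2)), dist_comm y₂ x₁]; exact hm3b
    · rw [dist_comm (γ (Lg/2)) x₁, dist_comm y₂ x₁]; exact hm3a
  calc dist m₁ m₂ ≤ dist m₁ (γ (Lg/2)) + dist (γ (Lg/2)) m₂ := dist_triangle _ _ _
    _ ≤ dist y₁ y₂ / 2 + dist x₁ x₂ / 2 := add_le_add e1 e2
    _ = (dist x₁ x₂ + dist y₁ y₂) / 2 := by ring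

/-- Maximum principle for continuous midpoint-convex functions on `[0,1]`. -/
lemma midpt_max {g : ℝ → ℝ} (hc : ContinuousOn g (Set.Icc 0 1))
    (hm : ∀ a ∈ Set.Icc (0:ℝ) 1, ∀ b ∈ Set.Icc (0:ℝ) 1, g ((a+b)/2) ≤ (g a + g b)/2) :
    ∀ t ∈ Set.Icc (0:ℝ) 1, g t ≤ max (g 0) (g 1) := by
  obtain ⟨x₀, hx₀, hmax⟩ := isCompact_Icc.exists_isMaxOn ⟨0, by norm_num⟩ hc
  have hkey : g x₀ ≤ max (g 0) (g 1) := by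
    set M : Set ℝ := {t | t ∈ Set.Icc (0:ℝ) 1 ∧ g t = g x₀} with hM
    have hMc : IsClosed M := by
      have : M = Set.Icc (0:ℝ) 1 ∩ g ⁻¹' {g x₀} := by
        ext t
        simp only [hM, Set.mem_setOf_eq, Set.mem_inter_iff, Set.mem_preimage,
          Set.mem_singleton_iff]
      rw [this]
      exact hc.preimage_isClosed_of_isClosed isClosed_Icc isClosed_singleton
    have hMne : M.Nonempty := ⟨x₀, hx₀, rfl⟩
    have hMbd : BddBelow M := ⟨0, fun t ht => ht.1.1⟩
    set l := sInf M with hl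
    have hlM : l ∈ M := hMc.csInf_mem hMne hMbd
    rcases eq_or_lt_of_le hlM.1.1 with h0 | h0
    · rw [← hlM.2, ← h0]; exact le_max_left _ _
    rcases eq_or_lt_of_le hlM.1.2 with h1 | h1
    · rw [← hlM.2, h1]; exact le_max_right _ _
    · exfalso
      set δ := min l (1 - l) with hδ
      have hδ0 : 0 < δ := lt_min h0 (by linarith)
      have ha : l - δ ∈ Set.Icc (0:ℝ) 1 := by
        constructor
        · have : δ ≤ l := min_le_left _ _
          linarith
        · linarith [hlM.1.2]
      have hb : l + δ ∈ Set.Icc (0:ℝ) 1 := by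
        constructor
        · linarith [hlM.1.1]
        · have : δ ≤ 1 - l := min_le_right _ _
          linarith
      have hmid := hm _ ha _ hb
      have heq : ((l - δ) + (l + δ))/2 = l := by ring
      rw [heq] at hmid
      have hga : g (l - δ) < g x₀ := by
        have h' : g (l - δ) ≤ g x₀ := hmax ha
        rcases h'.lt_or_eq with h | h
        · exact h
        · exfalso
          have : (l - δ) ∈ M := ⟨ha, h⟩
          have := csInf_le hMbd this
          linarith
      have hgb : g (l + δ) ≤ g x₀ := hmax hb
      rw [hlM.2] at hmid
      linarith
  intro t ht
  exact le_trans (hmax ht) hkey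

end AuxLemmas

open Filter Topology

/-- Proposition 4.6: if `C` is a closed convex Morse subset of a proper CAT(0) space,
containing all geodesic lines parallel to geodesic lines in `C`, on which a group `Γ₀`
of isometries acts cocompactly, then for all `r > ε > 0` there is `C₀ > 0` such that a
geodesic segment staying in the `r`-neighborhood of `C` on `[a,b]` stays in the
`ε`-neighborhood of `C` on `[a + C₀, b - C₀]`. -/
theorem close_long_implies_very_close
    {X : Type*} [MetricSpace X] [ProperSpace X] [CAT0 X]
    (C : Set X) (hCne : C.Nonempty) (hclosed : IsClosed C) (hconv : GeodConvex C)
    (hMorse : IsMorse C)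
    (hpar : ∀ ℓ : ℝ → X, IsGeodLine ℓ → ParallelToLineIn C ℓ → ∀ t : ℝ, ℓ t ∈ C)
    (Γ₀ : Subgroup (X ≃ᵢ X)) (hinv : ∀ g ∈ Γ₀, (g : X ≃ᵢ X) '' C = C)
    (o : X) (ho : o ∈ C) (R₀ : ℝ)
    (hcocpt : ∀ x ∈ C, ∃ g ∈ Γ₀, dist x ((g : X ≃ᵢ X) o) ≤ R₀) :
    ∀ r ε : ℝ, ε < r → 0 < ε → ∃ C₀ : ℝ, 0 < C₀ ∧
      ∀ ℓ : ℝ → X, ∀ a b : ℝ, a ≤ b → IsGeodesicOn ℓ a b →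
        (∀ t ∈ Set.Icc a b, Metric.infDist (ℓ t) C < r) →
        ∀ t ∈ Set.Icc (a + C₀) (b - C₀), Metric.infDist (ℓ t) C < ε := by
  classical
  intro r ε hεr hε
  by_contra hcon
  push_neg at hcon
  have hr0 : (0:ℝ) < r := hε.trans hεr
  -- Step 1: for each n, a recentred geodesic on [-(n+1), n+1] staying r-close to C,
  -- ε-far from C at time 0, and with γ 0 near the basepoint o.
  have key : ∀ n : ℕ, ∃ γ : ℝ → X,
      (∀ s ∈ Set.Icc (-((n:ℝ)+1)) ((n:ℝ)+1), ∀ t ∈ Set.Icc (-((n:ℝ)+1)) ((n:ℝ)+1),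
        dist (γ s) (γ t) = |s - t|) ∧
      (∀ t ∈ Set.Icc (-((n:ℝ)+1)) ((n:ℝ)+1), Metric.infDist (γ t) C < r) ∧
      ε ≤ Metric.infDist (γ 0) C ∧ dist (γ 0) o ≤ r + R₀ := by
    intro n
    obtain ⟨ℓ, a, b, hab, hgeo, hnr, t₀, ht₀, hεt⟩ := hcon ((n:ℝ)+1) (by positivity)
    have hmem : ∀ s ∈ Set.Icc (-((n:ℝ)+1)) ((n:ℝ)+1), s + t₀ ∈ Set.Icc a b := by
      intro s hs
      obtain ⟨h1, h2⟩ := hs; obtain ⟨h3, h4⟩ := ht₀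
      exact ⟨by linarith, by linarith⟩
    have hNn : (0:ℝ) ≤ (n:ℝ)+1 := by positivity
    have h0m : (0:ℝ) ∈ Set.Icc (-((n:ℝ)+1)) ((n:ℝ)+1) := ⟨by linarith, by linarith⟩
    have ht₀mem : t₀ ∈ Set.Icc a b := by simpa using hmem 0 h0m
    obtain ⟨p, hpC, hpd⟩ := (Metric.infDist_lt_iff hCne).mp (hnr t₀ ht₀mem)
    obtain ⟨g, hgΓ, hgo⟩ := hcocpt p hpC
    have himg : (g : X ≃ᵢ X).symm '' C = C := by
      conv_lhs => rw [← hinv g hgΓ, ← Set.image_comp]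
      simp
    have hID : ∀ x : X, Metric.infDist ((g : X ≃ᵢ X).symm x) C = Metric.infDist x C := by
      intro x
      conv_lhs => rw [← himg]
      exact Metric.infDist_image (g : X ≃ᵢ X).symm.isometry
    refine ⟨fun s => (g : X ≃ᵢ X).symm (ℓ (s + t₀)), ?_, ?_, ?_, ?_⟩
    · intro s hs t ht
      rw [IsometryEquiv.dist_eq, hgeo _ (hmem s hs) _ (hmem t ht)]
      congr 1; ring
    · intro t ht
      rw [hID]
      exact hnr _ (hmem t ht)
    · rw [hID, zero_add]
      exact hεt
    · have heq : dist ((g : X ≃ᵢ X).symm (ℓ (0 + t₀))) o = dist (ℓ t₀) ((g : X ≃ᵢ X) o) := by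
        rw [← IsometryEquiv.dist_eq (g : X ≃ᵢ X), IsometryEquiv.apply_symm_apply, zero_add]
      rw [heq]
      calc dist (ℓ t₀) ((g : X ≃ᵢ X) o) ≤ dist (ℓ t₀) p + dist p ((g : X ≃ᵢ X) o) :=
            dist_triangle _ _ _
        _ ≤ r + R₀ := add_le_add hpd.le hgo
  choose γ hgeo hnear hfar hctr using key
  -- Step 2: ultrafilter limit machinery.
  set U : Ultrafilter ℕ := Ultrafilter.of Filter.atTop with hUdef
  have hUle : (U : Filter ℕ) ≤ Filter.atTop := Ultrafilter.of_le _
  have hlim : ∀ (f : ℕ → X) (K : ℝ), (∀ᶠ n in (U : Filter ℕ), f n ∈ Metric.closedBall o K) →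
      ∃ x, Filter.Tendsto f (U : Filter ℕ) (𝓝 x) := by
    intro f K hf
    obtain ⟨x, -, hx⟩ := (isCompact_closedBall o K).ultrafilter_le_nhds (U.map f)
      (by rwa [Ultrafilter.coe_map, Filter.le_principal_iff, Filter.mem_map])
    exact ⟨x, hx⟩
  have hev : ∀ t : ℝ, ∀ᶠ n : ℕ in (U : Filter ℕ), |t| ≤ (n:ℝ) + 1 := by
    intro t
    refine hUle ?_
    filter_upwards [Filter.eventually_ge_atTop ⌈|t|⌉₊] with n hn
    calc |t| ≤ (⌈|t|⌉₊ : ℝ) := Nat.le_ceil _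
      _ ≤ (n : ℝ) := Nat.cast_le.mpr hn
      _ ≤ (n : ℝ) + 1 := by linarith
  have habs : ∀ (t : ℝ) (n : ℕ), |t| ≤ (n:ℝ)+1 → t ∈ Set.Icc (-((n:ℝ)+1)) ((n:ℝ)+1) := by
    intro t n h
    exact ⟨(abs_le.mp h).1, (abs_le.mp h).2⟩
  have h0mem : ∀ n : ℕ, (0:ℝ) ∈ Set.Icc (-((n:ℝ)+1)) ((n:ℝ)+1) := by
    intro n
    have : (0:ℝ) ≤ (n:ℝ)+1 := by positivity
    exact ⟨by linarith, by linarith⟩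
  -- Step 3: the limit geodesic line L.
  have hLex : ∀ t : ℝ, ∃ x, Filter.Tendsto (fun n => γ n t) (U : Filter ℕ) (𝓝 x) := by
    intro t
    refine hlim _ (|t| + (r + R₀)) ?_
    filter_upwards [hev t] with n hn
    have h1 : dist (γ n t) (γ n 0) = |t - 0| := hgeo n t (habs t n hn) 0 (h0mem n)
    have h2 : dist (γ n t) o ≤ |t| + (r + R₀) := by
      calc dist (γ n t) o ≤ dist (γ n t) (γ n 0) + dist (γ n 0) o := dist_triangle _ _ _
        _ ≤ |t| + (r + R₀) := by rw [h1, sub_zero]; linarith [hctr n]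
    exact Metric.mem_closedBall.mpr h2
  choose L hL using hLex
  have hLline : IsGeodLine L := by
    intro s t
    have h1 : Filter.Tendsto (fun n => dist (γ n s) (γ n t)) (U : Filter ℕ)
        (𝓝 (dist (L s) (L t))) := (hL s).dist (hL t)
    have h2 : (fun n => dist (γ n s) (γ n t)) =ᶠ[(U : Filter ℕ)] (fun _ => |s - t|) := by
      filter_upwards [hev s, hev t] with n hs ht
      exact hgeo n s (habs s n hs) t (habs t n ht)
    exact tendsto_nhds_unique (Filter.Tendsto.congr' h2 h1) tendsto_const_nhds
  have hLnear : ∀ t : ℝ, Metric.infDist (L t) C ≤ r := by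
    intro t
    have h1 : Filter.Tendsto (fun n => Metric.infDist (γ n t) C) (U : Filter ℕ)
        (𝓝 (Metric.infDist (L t) C)) :=
      ((Metric.continuous_infDist_pt C).tendsto (L t)).comp (hL t)
    refine le_of_tendsto h1 ?_
    filter_upwards [hev t] with n hn
    exact (hnear n t (habs t n hn)).le
  have hLfar : ε ≤ Metric.infDist (L 0) C := by
    have h1 : Filter.Tendsto (fun n => Metric.infDist (γ n 0) C) (U : Filter ℕ)
        (𝓝 (Metric.infDist (L 0) C)) :=
      ((Metric.continuous_infDist_pt C).tendsto (L 0)).comp (hL 0)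
    exact ge_of_tendsto h1 (Filter.Eventually.of_forall fun n => hfar n)
  have hLiso : Isometry L :=
    Isometry.of_dist_eq fun s t => by rw [hLline s t, Real.dist_eq]
  -- Step 4: chords in C approximating L on [-(n+1), n+1].
  have chord : ∀ n : ℕ, ∃ σ : ℝ → X, ∃ Lg : ℝ,
      0 ≤ Lg ∧
      (∀ s ∈ Set.Icc (0:ℝ) Lg, ∀ t ∈ Set.Icc (0:ℝ) Lg, dist (σ s) (σ t) = |s - t|) ∧
      (∀ s ∈ Set.Icc (0:ℝ) Lg, σ s ∈ C) ∧
      |Lg - 2*((n:ℝ)+1)| ≤ 2*(r+1) ∧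
      (∀ t ∈ Set.Icc (-((n:ℝ)+1)) ((n:ℝ)+1),
        dist (L t) (σ ((t+((n:ℝ)+1))/(2*((n:ℝ)+1)) * Lg)) ≤ r + 1) := by
    intro n
    set N : ℝ := (n:ℝ)+1 with hN
    have hN0 : 0 < N := by positivity
    obtain ⟨u, huC, hud⟩ := (Metric.infDist_lt_iff hCne).mp
      (lt_of_le_of_lt (hLnear (-N)) (by linarith) : Metric.infDist (L (-N)) C < r + 1)
    obtain ⟨v, hvC, hvd⟩ := (Metric.infDist_lt_iff hCne).mp
      (lt_of_le_of_lt (hLnear N) (by linarith) : Metric.infDist (L N) C < r + 1)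
    obtain ⟨σ₀, hσ₀, hσ00, hσ01⟩ := CAT0.geodesic u v
    set Lg : ℝ := dist u v with hLgdef
    have hLg0 : 0 ≤ Lg := dist_nonneg
    set cl : ℝ → ℝ := fun t => max (min t Lg) 0 with hcl
    have hclmem : ∀ t, cl t ∈ Set.Icc (0:ℝ) Lg :=
      fun t => ⟨le_max_right _ _, max_le (min_le_right _ _) hLg0⟩
    have hclid : ∀ t ∈ Set.Icc (0:ℝ) Lg, cl t = t := by
      intro t ht
      simp only [hcl, min_eq_left ht.2, max_eq_left ht.1]
    set σ : ℝ → X := fun t => σ₀ (cl t) with hσdef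
    have hσgeo : ∀ s ∈ Set.Icc (0:ℝ) Lg, ∀ t ∈ Set.Icc (0:ℝ) Lg,
        dist (σ s) (σ t) = |s - t| := by
      intro s hs t ht
      simp only [hσdef]
      rw [hclid s hs, hclid t ht]
      exact hσ₀ s hs t ht
    have hσC : ∀ s ∈ Set.Icc (0:ℝ) Lg, σ s ∈ C := by
      intro s hs
      have hin := hconv σ₀ 0 Lg hLg0 hσ₀ (by rw [hσ00]; exact huC) (by rw [hσ01]; exact hvC)
      simp only [hσdef]
      rw [hclid s hs]
      exact hin s hs
    have hσlip : LipschitzWith 1 σ := by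
      have hcllip : LipschitzWith 1 cl := (LipschitzWith.id.min_const Lg).max_const 0
      refine LipschitzWith.of_dist_le_mul fun a b => ?_
      have h := hcllip.dist_le_mul a b
      have he : dist (σ a) (σ b) = dist (cl a) (cl b) := by
        simp only [hσdef]
        rw [hσ₀ _ (hclmem a) _ (hclmem b), Real.dist_eq]
      rw [he]
      exact h
    have hσcont : Continuous σ := hσlip.continuous
    set g : ℝ → ℝ := fun l => dist (L (-N + 2*N*l)) (σ (l * Lg)) with hg
    have hgc : ContinuousOn g (Set.Icc 0 1) := by
      apply Continuous.continuousOn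
      exact (hLiso.continuous.comp (continuous_const.add (continuous_const.mul
        continuous_id))).dist (hσcont.comp (continuous_id.mul continuous_const))
    have hmul_mem : ∀ c ∈ Set.Icc (0:ℝ) 1, c * Lg ∈ Set.Icc (0:ℝ) Lg := by
      intro c hc
      exact ⟨mul_nonneg hc.1 hLg0, by nlinarith [hc.2, hLg0]⟩
    have hgm : ∀ a ∈ Set.Icc (0:ℝ) 1, ∀ b ∈ Set.Icc (0:ℝ) 1,
        g ((a+b)/2) ≤ (g a + g b)/2 := by
      intro a ha b hb
      have hab2 : (a+b)/2 ∈ Set.Icc (0:ℝ) 1 := by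
        constructor
        · linarith [ha.1, hb.1]
        · linarith [ha.2, hb.2]
      have hN2 : (0:ℝ) ≤ 2*N := by linarith
      have hmid1 : dist (L (-N + 2*N*a)) (L (-N + 2*N*((a+b)/2)))
          = dist (L (-N + 2*N*a)) (L (-N + 2*N*b)) / 2 := by
        rw [hLline, hLline,
          show (-N + 2*N*a) - (-N + 2*N*((a+b)/2)) = N*(a-b) by ring,
          show (-N + 2*N*a) - (-N + 2*N*b) = (2*N)*(a-b) by ring,
          abs_mul, abs_mul, abs_of_nonneg hN0.le, abs_of_nonneg hN2]
        ring
      have hmid1' : dist (L (-N + 2*N*((a+b)/2))) (L (-N + 2*N*b))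
          = dist (L (-N + 2*N*a)) (L (-N + 2*N*b)) / 2 := by
        rw [hLline, hLline,
          show (-N + 2*N*((a+b)/2)) - (-N + 2*N*b) = N*(a-b) by ring,
          show (-N + 2*N*a) - (-N + 2*N*b) = (2*N)*(a-b) by ring,
          abs_mul, abs_mul, abs_of_nonneg hN0.le, abs_of_nonneg hN2]
        ring
      have hmid2 : dist (σ (a*Lg)) (σ (((a+b)/2)*Lg))
          = dist (σ (a*Lg)) (σ (b*Lg)) / 2 := by
        rw [hσgeo _ (hmul_mem a ha) _ (hmul_mem _ hab2),
          hσgeo _ (hmul_mem a ha) _ (hmul_mem b hb),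
          show a*Lg - ((a+b)/2)*Lg = ((a-b)/2)*Lg by ring,
          show a*Lg - b*Lg = (a-b)*Lg by ring,
          abs_mul, abs_mul, abs_div, abs_of_nonneg hLg0]
        simp [abs_of_nonneg]
        ring
      have hmid2' : dist (σ (((a+b)/2)*Lg)) (σ (b*Lg))
          = dist (σ (a*Lg)) (σ (b*Lg)) / 2 := by
        rw [hσgeo _ (hmul_mem _ hab2) _ (hmul_mem b hb),
          hσgeo _ (hmul_mem a ha) _ (hmul_mem b hb),
          show ((a+b)/2)*Lg - b*Lg = ((a-b)/2)*Lg by ring,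
          show a*Lg - b*Lg = (a-b)*Lg by ring,
          abs_mul, abs_mul, abs_div, abs_of_nonneg hLg0]
        simp [abs_of_nonneg]
        ring
      exact cat0_mid_cmp (L (-N + 2*N*a)) (L (-N + 2*N*b)) (σ (a*Lg)) (σ (b*Lg))
        (L (-N + 2*N*((a+b)/2))) (σ (((a+b)/2)*Lg)) hmid1 hmid1' hmid2 hmid2'
    have hmax := midpt_max hgc hgm
    have hg0 : g 0 ≤ r + 1 := by
      have h1 : σ (0 * Lg) = u := by
        simp only [hσdef, zero_mul]
        rw [hclid 0 ⟨le_refl _, hLg0⟩]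
        exact hσ00
      simp only [hg, mul_zero, add_zero, h1]
      simpa using hud.le
    have hg1 : g 1 ≤ r + 1 := by
      have h1 : σ (1 * Lg) = v := by
        simp only [hσdef, one_mul]
        rw [hclid Lg ⟨hLg0, le_refl _⟩]
        exact hσ01
      simp only [hg, mul_one, h1]
      rw [show -N + 2*N = N by ring]
      exact hvd.le
    refine ⟨σ, Lg, hLg0, hσgeo, hσC, ?_, ?_⟩
    · have h2N : dist (L (-N)) (L N) = 2*N := by
        rw [hLline]
        rw [show -N - N = -(2*N) by ring, abs_neg, abs_of_nonneg (by linarith)]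
      have tri1 : dist u v ≤ dist u (L (-N)) + dist (L (-N)) (L N) + dist (L N) v :=
        dist_triangle4 _ _ _ _
      have tri2 : dist (L (-N)) (L N) ≤ dist (L (-N)) u + dist u v + dist v (L N) :=
        dist_triangle4 _ _ _ _
      rw [dist_comm u (L (-N))] at tri1
      rw [dist_comm v (L N)] at tri2
      rw [h2N] at tri1 tri2
      rw [abs_le]
      constructor
      · linarith [hud.le, hvd.le]
      · linarith [hud.le, hvd.le]
    · intro t ht
      set lam : ℝ := (t+N)/(2*N) with hlamdef
      have hlam : lam ∈ Set.Icc (0:ℝ) 1 := by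
        constructor
        · apply div_nonneg (by linarith [ht.1]) (by linarith)
        · rw [div_le_one (by linarith)]
          linarith [ht.2]
      have hA : -N + 2*N*lam = t := by
        rw [hlamdef]
        field_simp
        ring
      calc dist (L t) (σ (lam * Lg)) = g lam := by rw [hg]; simp only; rw [hA]
        _ ≤ max (g 0) (g 1) := hmax lam hlam
        _ ≤ r + 1 := max_le hg0 hg1
  choose σ Lg hLg0 hσgeo hσC hLgng hσclose using chord
  -- Step 5: the parallel line L₂ in C.
  have hparammem : ∀ (t : ℝ) (n : ℕ), |t| ≤ (n:ℝ)+1 →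
      (t+((n:ℝ)+1))/(2*((n:ℝ)+1)) * Lg n ∈ Set.Icc 0 (Lg n) := by
    intro t n hn
    have hN0 : (0:ℝ) < (n:ℝ)+1 := by positivity
    have h1 : (0:ℝ) ≤ (t+((n:ℝ)+1))/(2*((n:ℝ)+1)) :=
      div_nonneg (by linarith [(abs_le.mp hn).1]) (by linarith)
    have h2 : (t+((n:ℝ)+1))/(2*((n:ℝ)+1)) ≤ 1 := by
      rw [div_le_one (by linarith)]
      linarith [(abs_le.mp hn).2]
    exact ⟨mul_nonneg h1 (hLg0 n), mul_le_of_le_one_left (hLg0 n) h2⟩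
  have hL2ex : ∀ t : ℝ, ∃ x, Filter.Tendsto
      (fun n => σ n ((t+((n:ℝ)+1))/(2*((n:ℝ)+1)) * Lg n)) (U : Filter ℕ) (𝓝 x) := by
    intro t
    refine hlim _ ((r+1) + |t| + dist (L 0) o) ?_
    filter_upwards [hev t] with n hn
    have h1 := hσclose n t (habs t n hn)
    have h2 : dist (L t) (L 0) = |t| := by rw [hLline]; simp
    refine Metric.mem_closedBall.mpr ?_
    calc dist (σ n ((t+((n:ℝ)+1))/(2*((n:ℝ)+1)) * Lg n)) o
        ≤ dist (σ n ((t+((n:ℝ)+1))/(2*((n:ℝ)+1)) * Lg n)) (L t) + dist (L t) (L 0)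
          + dist (L 0) o := dist_triangle4 _ _ _ _
      _ ≤ (r+1) + |t| + dist (L 0) o := by
          rw [dist_comm _ (L t), h2]
          linarith
  choose L₂ hL₂ using hL2ex
  have hL₂C : ∀ t : ℝ, L₂ t ∈ C := by
    intro t
    refine hclosed.mem_of_tendsto (hL₂ t) ?_
    filter_upwards [hev t] with n hn
    exact hσC n _ (hparammem t n hn)
  have hL₂d : ∀ t : ℝ, dist (L t) (L₂ t) ≤ r + 1 := by
    intro t
    refine le_of_tendsto (tendsto_const_nhds.dist (hL₂ t)) ?_
    filter_upwards [hev t] with n hn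
    exact hσclose n t (habs t n hn)
  have hL₂line : IsGeodLine L₂ := by
    intro s t
    have h0 : Filter.Tendsto (fun n : ℕ => (r+1)/((n:ℝ)+1)) Filter.atTop (𝓝 0) :=
      Filter.Tendsto.div_atTop tendsto_const_nhds
        (Filter.tendsto_atTop_add_const_right _ 1 tendsto_natCast_atTop_atTop)
    have hlow : Filter.Tendsto (fun n : ℕ => 1 - (r+1)/((n:ℝ)+1)) Filter.atTop (𝓝 1) := by
      simpa using tendsto_const_nhds.sub h0
    have hup : Filter.Tendsto (fun n : ℕ => 1 + (r+1)/((n:ℝ)+1)) Filter.atTop (𝓝 1) := by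
      simpa using tendsto_const_nhds.add h0
    have hqlim : Filter.Tendsto (fun n : ℕ => Lg n / (2*((n:ℝ)+1))) Filter.atTop (𝓝 1) := by
      refine tendsto_of_tendsto_of_tendsto_of_le_of_le hlow hup ?_ ?_
      · intro n
        have hN0 : (0:ℝ) < (n:ℝ)+1 := by positivity
        have hb := (abs_le.mp (hLgng n)).1
        rw [le_div_iff₀ (by linarith : (0:ℝ) < 2*((n:ℝ)+1))]
        have : (1 - (r+1)/((n:ℝ)+1)) * (2*((n:ℝ)+1)) = 2*((n:ℝ)+1) - 2*(r+1) := by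
          field_simp
        rw [this]
        linarith
      · intro n
        have hN0 : (0:ℝ) < (n:ℝ)+1 := by positivity
        have hb := (abs_le.mp (hLgng n)).2
        rw [div_le_iff₀ (by linarith : (0:ℝ) < 2*((n:ℝ)+1))]
        have : (1 + (r+1)/((n:ℝ)+1)) * (2*((n:ℝ)+1)) = 2*((n:ℝ)+1) + 2*(r+1) := by
          field_simp
        rw [this]
        linarith
    have hq : Filter.Tendsto (fun n : ℕ => |s-t| * (Lg n / (2*((n:ℝ)+1)))) (U : Filter ℕ)
        (𝓝 (|s-t|)) := by
      have := (hqlim.const_mul |s-t|).mono_left hUle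
      simpa using this
    have heq : (fun n : ℕ => dist (σ n ((s+((n:ℝ)+1))/(2*((n:ℝ)+1)) * Lg n))
        (σ n ((t+((n:ℝ)+1))/(2*((n:ℝ)+1)) * Lg n)))
        =ᶠ[(U : Filter ℕ)] (fun n : ℕ => |s-t| * (Lg n / (2*((n:ℝ)+1)))) := by
      filter_upwards [hev s, hev t] with n hs ht
      have hN0 : (0:ℝ) < (n:ℝ)+1 := by positivity
      rw [hσgeo n _ (hparammem s n hs) _ (hparammem t n ht),
        show (s+((n:ℝ)+1))/(2*((n:ℝ)+1)) * Lg n - (t+((n:ℝ)+1))/(2*((n:ℝ)+1)) * Lg n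
          = (s-t) * (Lg n / (2*((n:ℝ)+1))) by field_simp; ring,
        abs_mul, abs_of_nonneg (div_nonneg (hLg0 n) (by linarith))]
    have hdist : Filter.Tendsto (fun n : ℕ => |s-t| * (Lg n / (2*((n:ℝ)+1)))) (U : Filter ℕ)
        (𝓝 (dist (L₂ s) (L₂ t))) :=
      Filter.Tendsto.congr' heq ((hL₂ s).dist (hL₂ t))
    exact tendsto_nhds_unique hdist hq
  -- Step 6: conclusion.
  have hparallel : ParallelToLineIn C L := ⟨L₂, hL₂line, hL₂C, r+1, hL₂d⟩
  have h0C : L 0 ∈ C := hpar L hLline hparallel 0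
  have h0 : Metric.infDist (L 0) C = 0 := Metric.infDist_zero_of_mem h0C
  rw [h0] at hLfar
  linarith
end
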